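/- arXiv:1307.5624 — 10 statements merged into one kernel-verified Lean document; each statement's English description precedes it below -/
import Mathlib

section
/- The number of ways to permute the multiset {x_1^ν, ..., x_n^ν} (where x_1 < ... < x_n) such that for each j, all elements between any two occurrences of x_j are at least x_j, together with t copies of a symbol 0 that is smaller than all x_i (with the same betweenness condition for 0), equals the product ∏_{k=0}^{n-1} (kν + t + 1). -/
/-- The "betweenness" condition of generalized Stirling permutations: for any
two equal entries of the word, every entry strictly between them is at least
as large as them. -/
def IsSmooth (l : List ℕ) : Prop :=
  ∀ i m k : ℕ, i < m → m < k → k < l.length →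
    l.getD i 0 = l.getD k 0 → l.getD i 0 ≤ l.getD m 0

/-- The multiset `{0^t, 1^ν, 2^ν, ..., n^ν}`. -/
def stirlingMultiset (ν t n : ℕ) : Multiset ℕ :=
  Multiset.replicate t 0 + (Finset.Icc 1 n).sum (fun j => Multiset.replicate ν j)

namespace StirlingProof


lemma M_succ (ν t n : ℕ) :
    stirlingMultiset ν t (n+1) = stirlingMultiset ν t n + Multiset.replicate ν (n+1) := by
  unfold stirlingMultiset
  rw [Finset.sum_Icc_succ_top (by omega)]
  exact (add_assoc _ _ _).symm

lemma card_M (ν t n : ℕ) : Multiset.card (stirlingMultiset ν t n) = t + n * ν := by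
  induction n with
  | zero => simp [stirlingMultiset]
  | succ n ih => rw [M_succ]; simp [ih]; ring

lemma mem_M {ν t n a : ℕ} (h : a ∈ stirlingMultiset ν t n) : a ≤ n := by
  unfold stirlingMultiset at h
  rw [Multiset.mem_add] at h
  rcases h with h | h
  · rw [Multiset.mem_replicate] at h; omega
  · rw [Multiset.mem_sum] at h
    obtain ⟨j, hj, hja⟩ := h
    rw [Multiset.mem_replicate] at hja
    rw [Finset.mem_Icc] at hj
    omega

lemma count_M (ν t n : ℕ) : Multiset.count (n+1) (stirlingMultiset ν t (n+1)) = ν := by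
  rw [M_succ, Multiset.count_add, Multiset.count_replicate_self]
  have : Multiset.count (n+1) (stirlingMultiset ν t n) = 0 := by
    rw [Multiset.count_eq_zero]
    intro h
    have := mem_M h; omega
  omega



lemma isSmooth_insert {l : List ℕ} {x ν p : ℕ} (hp : p ≤ l.length)
    (hs : IsSmooth l) (hlt : ∀ a ∈ l, a < x) :
    IsSmooth (l.take p ++ List.replicate ν x ++ l.drop p) := by
  set L := l.take p ++ List.replicate ν x ++ l.drop p with hL
  have hlenA : (l.take p).length = p := by simp [hp]
  have hlen : L.length = l.length + ν := by simp [hL]; omega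
  have hv1 : ∀ j, j < p → L.getD j 0 = l.getD j 0 := by
    intro j hj
    rw [hL, List.append_assoc, List.getD_append _ _ _ _ (by omega),
      List.getD_eq_getElem _ _ (by omega), List.getD_eq_getElem _ _ (by omega),
      List.getElem_take]
  have hv2 : ∀ j, p ≤ j → j < p + ν → L.getD j 0 = x := by
    intro j h1 h2
    rw [hL, List.append_assoc, List.getD_append_right _ _ _ _ (by omega),
      List.getD_append _ _ _ _ (by simp; omega),
      List.getD_eq_getElem _ _ (by simp; omega), List.getElem_replicate]
  have hv3 : ∀ j, p + ν ≤ j → L.getD j 0 = l.getD (j - ν) 0 := by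
    intro j h1
    rw [hL, List.append_assoc, List.getD_append_right _ _ _ _ (by omega),
      List.getD_append_right _ _ _ _ (by simp; omega)]
    simp only [List.length_take, List.length_replicate]
    rcases lt_or_ge (j - ν) l.length with h2 | h2
    · rw [List.getD_eq_getElem _ _ (by simp only [List.length_drop]; omega),
        List.getD_eq_getElem _ _ h2, List.getElem_drop]
      congr 1; omega
    · rw [List.getD_eq_default _ _ (by simp only [List.length_drop]; omega),
        List.getD_eq_default _ _ h2]
  have hvl : ∀ j, j < l.length → l.getD j 0 < x := by
    intro j hj
    rw [List.getD_eq_getElem _ _ hj]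
    exact hlt _ (List.getElem_mem _)
  intro i m k hi hm hk heq
  rw [hlen] at hk
  by_cases hmb : p ≤ m ∧ m < p + ν
  · -- middle in block
    rw [hv2 m hmb.1 hmb.2]
    rcases lt_or_ge i p with h | h
    · exact le_of_lt ((hv1 i h) ▸ hvl i (by omega))
    · rcases lt_or_ge i (p + ν) with h' | h'
      · exact le_of_eq (hv2 i h h')
      · exact le_of_lt ((hv3 i h') ▸ hvl (i - ν) (by omega))
  · push_neg at hmb
    by_cases hib : p ≤ i ∧ i < p + ν
    · -- i in block, m not: then k not in block either (k > m could still be…)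
      -- since i < m and m not in block: m ≥ p+ν (as m > i ≥ p). so k > m ≥ p+ν.
      have hm' : p + ν ≤ m := by omega
      have hk' : p + ν ≤ k := by omega
      rw [hv2 i hib.1 hib.2] at heq
      have := hvl (k - ν) (by omega)
      rw [← hv3 k hk'] at this
      omega
    · by_cases hkb : p ≤ k ∧ k < p + ν
      · -- k in block, i not: i < p (since if i ≥ p+ν then i > k)
        have hi' : i < p := by push_neg at hib; omega
        rw [hv2 k hkb.1 hkb.2] at heq
        have := hvl i (by omega)
        rw [← hv1 i hi'] at this
        omega
      · -- all outside
        push_neg at hib hkb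
        have key : ∀ j, j < L.length → ¬(p ≤ j ∧ j < p + ν) →
            L.getD j 0 = l.getD (if j < p then j else j - ν) 0 := by
          intro j hj hjb
          split
          · exact hv1 j (by assumption)
          · exact hv3 j (by omega)
        set i' := if i < p then i else i - ν with hi'd
        set m' := if m < p then m else m - ν with hm'd
        set k' := if k < p then k else k - ν with hk'd
        have e1 : L.getD i 0 = l.getD i' 0 := key i (by omega) (by omega)
        have e2 : L.getD m 0 = l.getD m' 0 := key m (by omega) (by omega)
        have e3 : L.getD k 0 = l.getD k' 0 := key k (by omega) (by omega)
        rw [e1, e3] at heq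
        rw [e1, e2]
        apply hs i' m' k'
        · simp only [hi'd, hm'd]; split <;> split <;> omega
        · simp only [hm'd, hk'd]; split <;> split <;> omega
        · simp only [hk'd]; split <;> omega
        · exact heq



lemma isSmooth_remove {A B : List ℕ} {x ν : ℕ}
    (hs : IsSmooth (A ++ List.replicate ν x ++ B)) : IsSmooth (A ++ B) := by
  set L := A ++ List.replicate ν x ++ B with hL
  have hlen : L.length = A.length + ν + B.length := by simp [hL]; omega
  have hw1 : ∀ j, j < A.length → (A ++ B).getD j 0 = L.getD j 0 := by
    intro j hj
    rw [List.getD_append _ _ _ _ hj, hL, List.append_assoc,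
      List.getD_append _ _ _ _ hj]
  have hw2 : ∀ j, A.length ≤ j → (A ++ B).getD j 0 = L.getD (j + ν) 0 := by
    intro j hj
    rw [List.getD_append_right _ _ _ _ hj, hL, List.append_assoc,
      List.getD_append_right _ _ _ _ (by omega),
      List.getD_append_right _ _ _ _ (by simp; omega)]
    simp only [List.length_replicate]
    congr 1
    omega
  intro i m k hi hm hk heq
  rw [List.length_append] at hk
  set i' := if i < A.length then i else i + ν with hi'd
  set m' := if m < A.length then m else m + ν with hm'd
  set k' := if k < A.length then k else k + ν with hk'd
  have key : ∀ j, ¬(j < A.length) → (A ++ B).getD j 0 = L.getD (j + ν) 0 := by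
    intro j hj; exact hw2 j (by omega)
  have e1 : (A ++ B).getD i 0 = L.getD i' 0 := by
    simp only [hi'd]; split
    · exact hw1 i (by assumption)
    · exact hw2 i (by omega)
  have e2 : (A ++ B).getD m 0 = L.getD m' 0 := by
    simp only [hm'd]; split
    · exact hw1 m (by assumption)
    · exact hw2 m (by omega)
  have e3 : (A ++ B).getD k 0 = L.getD k' 0 := by
    simp only [hk'd]; split
    · exact hw1 k (by assumption)
    · exact hw2 k (by omega)
  rw [e1, e3] at heq
  rw [e1, e2]
  apply hs i' m' k'
  · simp only [hi'd, hm'd]; split <;> split <;> omega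
  · simp only [hm'd, hk'd]; split <;> split <;> omega
  · rw [hlen]; simp only [hk'd]; split <;> omega
  · exact heq

lemma block {L : List ℕ} {x ν : ℕ} (hν : 0 < ν) (hs : IsSmooth L)
    (hub : ∀ a ∈ L, a ≤ x) (hc : L.count x = ν) :
    L.idxOf x + ν ≤ L.length ∧
      L = L.take (L.idxOf x) ++ List.replicate ν x ++ L.drop (L.idxOf x + ν) := by
  classical
  have hxm : x ∈ L := by
    rw [← List.count_pos_iff, hc]; exact hν
  set p := L.idxOf x with hpd
  have hp : p < L.length := List.idxOf_lt_length_iff.2 hxm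
  have hvp : L.getD p 0 = x := by
    rw [List.getD_eq_getElem _ _ hp]; exact List.getElem_idxOf hp
  have hmin : ∀ j, j < p → L.getD j 0 ≠ x := by
    intro j hj h
    have hjl : j < L.length := by omega
    have := List.not_of_lt_findIdx (p := fun y => y == x) (xs := L)
      (show j < L.findIdx (fun y => y == x) from hj)
    rw [List.getD_eq_getElem _ _ hjl] at h
    simp [h] at this
  set P : ℕ → Prop := fun j => L.getD j 0 = x with hPd
  set q := Nat.findGreatest P (L.length - 1) with hqd
  have hpq : p ≤ q := Nat.le_findGreatest (P := P) (by omega) (show P p from hvp)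
  have hq : L.getD q 0 = x := Nat.findGreatest_spec (P := P) (m := p) (by omega) (show P p from hvp)
  have hq' : q < L.length := by
    have := Nat.findGreatest_le (P := P) (L.length - 1)
    omega
  have hmax : ∀ j, q < j → j < L.length → L.getD j 0 ≠ x := by
    intro j h1 h2
    exact Nat.findGreatest_is_greatest (P := P) h1 (by omega)
  have hmid : ∀ j, p ≤ j → j ≤ q → L.getD j 0 = x := by
    intro j h1 h2
    rcases eq_or_lt_of_le h1 with rfl | h1'
    · exact hvp
    rcases eq_or_lt_of_le h2 with rfl | h2'
    · exact hq
    have h3 := hs p j q h1' h2' hq' (hvp.trans hq.symm)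
    rw [hvp] at h3
    have h4 : L.getD j 0 ≤ x := by
      rw [List.getD_eq_getElem _ _ (by omega)]
      exact hub _ (List.getElem_mem _)
    omega
  have htake0 : List.count x (L.take p) = 0 := by
    rw [List.count_eq_zero]
    intro hmem
    obtain ⟨n, hn, he⟩ := List.mem_iff_getElem.1 hmem
    have hn' : n < p := by simp at hn; omega
    apply hmin n hn'
    rw [List.getD_eq_getElem _ _ (by omega)]
    exact (List.getElem_take (h := hn)).symm.trans he
  have hdrop0 : List.count x (L.drop (q+1)) = 0 := by
    rw [List.count_eq_zero]
    intro hmem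
    obtain ⟨n, hn, he⟩ := List.mem_iff_getElem.1 hmem
    rw [List.getElem_drop] at he
    apply hmax (q+1+n) (by omega) (by simp at hn; omega)
    rw [List.getD_eq_getElem _ _ (by simp at hn; omega), he]
  have hmidrep : (L.drop p).take (q+1-p) = List.replicate (q+1-p) x := by
    rw [List.eq_replicate_iff]
    constructor
    · simp; omega
    · intro b hb
      obtain ⟨n, hn, he⟩ := List.mem_iff_getElem.1 hb
      rw [List.getElem_take, List.getElem_drop] at he
      rw [← he, ← List.getD_eq_getElem _ 0 (by simp at hn; omega)]
      exact hmid (p+n) (by omega) (by simp at hn; omega)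
  have hdec : L = L.take p ++ List.replicate (q+1-p) x ++ L.drop (q+1) := by
    conv_lhs => rw [← List.take_append_drop p L]
    rw [List.append_assoc]
    congr 1
    conv_lhs => rw [← List.take_append_drop (q+1-p) (L.drop p)]
    rw [hmidrep, List.drop_drop]
    congr 2
    omega
  have hcnt : ν = q + 1 - p := by
    have := congrArg (List.count x) hdec
    rw [hc, List.count_append, List.count_append, htake0, hdrop0,
      List.count_replicate_self] at this
    omega
  constructor
  · omega
  · rw [hcnt]
    convert hdec using 3
    omega










def fwd (x k p : ℕ) (l : List ℕ) : List ℕ :=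
  l.take p ++ List.replicate k x ++ l.drop p

def bwd (x k : ℕ) (L : List ℕ) : List ℕ :=
  L.take (L.idxOf x) ++ L.drop (L.idxOf x + k)

lemma coe_fwd (x k p : ℕ) (l : List ℕ) (hp : p ≤ l.length) :
    (↑(fwd x k p l) : Multiset ℕ) = ↑l + Multiset.replicate k x := by
  unfold fwd
  rw [← Multiset.coe_add, ← Multiset.coe_add, ← Multiset.coe_replicate]
  have : (↑(l.take p) : Multiset ℕ) + ↑(List.replicate k x) + ↑(l.drop p)
      = (↑(l.take p) + ↑(l.drop p)) + (↑(List.replicate k x) : Multiset ℕ) := by abel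
  rw [this, Multiset.coe_add, List.take_append_drop]

lemma fwd_spec (ν t m : ℕ) (hν : 1 ≤ ν) (l : List ℕ)
    (hm : (↑l : Multiset ℕ) = stirlingMultiset ν t m) (hs : IsSmooth l)
    (p : ℕ) (hp : p ≤ t + m * ν) :
    (↑(fwd (m+1) ν p l) : Multiset ℕ) = stirlingMultiset ν t (m+1)
      ∧ IsSmooth (fwd (m+1) ν p l) := by
  have hlen : l.length = t + m * ν := by
    have := congrArg Multiset.card hm
    rwa [Multiset.coe_card, card_M] at this
  have hp' : p ≤ l.length := by omega
  refine ⟨?_, ?_⟩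
  · rw [coe_fwd _ _ _ _ hp', hm, M_succ]
  · exact isSmooth_insert hp' hs (fun a ha => by
      have : a ≤ m := mem_M (hm ▸ Multiset.mem_coe.2 ha)
      omega)

lemma bwd_spec (ν t m : ℕ) (hν : 1 ≤ ν) (L : List ℕ)
    (hm : (↑L : Multiset ℕ) = stirlingMultiset ν t (m+1)) (hs : IsSmooth L) :
    L.idxOf (m+1) ≤ t + m * ν
      ∧ ((↑(bwd (m+1) ν L) : Multiset ℕ) = stirlingMultiset ν t m
          ∧ IsSmooth (bwd (m+1) ν L))
      ∧ L = fwd (m+1) ν (L.idxOf (m+1)) (bwd (m+1) ν L) := by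
  have hlen : L.length = t + (m+1) * ν := by
    have := congrArg Multiset.card hm
    rwa [Multiset.coe_card, card_M] at this
  have hub : ∀ a ∈ L, a ≤ m + 1 := fun a ha => mem_M (hm ▸ Multiset.mem_coe.2 ha)
  have hcnt : L.count (m+1) = ν := by
    have := congrArg (Multiset.count (m+1)) hm
    rwa [Multiset.coe_count, count_M] at this
  obtain ⟨hple, hdec⟩ := block (x := m+1) (ν := ν) (by omega) hs hub hcnt
  set p := L.idxOf (m+1) with hpd
  have hmul' : (m+1) * ν = m * ν + ν := by ring
  have hp : p ≤ t + m * ν := by omega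
  have htl : (L.take p).length = p := by simp; omega
  have hfb : fwd (m+1) ν p (bwd (m+1) ν L) = L := by
    unfold fwd bwd
    rw [List.take_left' htl, List.drop_left' htl]
    exact hdec.symm
  have hcoe : (↑(bwd (m+1) ν L) : Multiset ℕ) = stirlingMultiset ν t m := by
    have h1 : (↑L : Multiset ℕ) = ↑(bwd (m+1) ν L) + Multiset.replicate ν (m+1) := by
      conv_lhs => rw [← hfb]
      rw [coe_fwd _ _ _ _ (by
        simp only [bwd, List.length_append, List.length_take, List.length_drop]
        omega)]
    rw [hm, M_succ] at h1
    exact add_right_cancel h1.symm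
  refine ⟨hp, ⟨hcoe, ?_⟩, hfb.symm⟩
  · have := hdec ▸ hs
    exact isSmooth_remove (x := m+1) (ν := ν) this

lemma fwd_inv (ν m p : ℕ) (hν : 1 ≤ ν) (l : List ℕ)
    (hub : ∀ a ∈ l, a ≤ m) (hp : p ≤ l.length) :
    (fwd (m+1) ν p l).idxOf (m+1) = p ∧ bwd (m+1) ν (fwd (m+1) ν p l) = l := by
  have htl : (l.take p).length = p := by simp; omega
  have hidx : (fwd (m+1) ν p l).idxOf (m+1) = p := by
    unfold fwd
    rw [List.append_assoc, List.idxOf_append_of_notMem (by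
      intro h
      have := hub _ (List.mem_of_mem_take h)
      omega)]
    obtain ⟨ν', rfl⟩ : ∃ ν', ν = ν' + 1 := ⟨ν - 1, by omega⟩
    rw [List.replicate_succ, List.cons_append, List.idxOf_cons_self, htl]
    omega
  refine ⟨hidx, ?_⟩
  unfold bwd
  rw [hidx]
  unfold fwd
  have e1 : List.take p (l.take p ++ List.replicate ν (m+1) ++ l.drop p) = l.take p := by
    rw [List.append_assoc]; exact List.take_left' htl
  have e2 : List.drop (p + ν) (l.take p ++ List.replicate ν (m+1) ++ l.drop p) = l.drop p := by
    apply List.drop_left'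
    simp only [List.length_append, List.length_take, List.length_replicate]
    omega
  rw [e1, e2, List.take_append_drop]

lemma card_step (ν t m : ℕ) (hν : 1 ≤ ν) :
    Nat.card {l : List ℕ // (↑l : Multiset ℕ) = stirlingMultiset ν t (m+1) ∧ IsSmooth l}
      = (t + m * ν + 1) *
        Nat.card {l : List ℕ // (↑l : Multiset ℕ) = stirlingMultiset ν t m ∧ IsSmooth l} := by
  have key : {l : List ℕ // (↑l : Multiset ℕ) = stirlingMultiset ν t (m+1) ∧ IsSmooth l}
      ≃ Fin (t + m * ν + 1) ×
        {l : List ℕ // (↑l : Multiset ℕ) = stirlingMultiset ν t m ∧ IsSmooth l} := by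
    refine
      { toFun := fun L => (⟨L.1.idxOf (m+1), by
          have := (bwd_spec ν t m hν L.1 L.2.1 L.2.2).1; omega⟩,
          ⟨bwd (m+1) ν L.1, (bwd_spec ν t m hν L.1 L.2.1 L.2.2).2.1⟩)
        invFun := fun x => ⟨fwd (m+1) ν x.1.val x.2.1,
          fwd_spec ν t m hν x.2.1 x.2.2.1 x.2.2.2 x.1.val (by omega)⟩
        left_inv := ?_
        right_inv := ?_ }
    · intro L
      apply Subtype.ext
      exact ((bwd_spec ν t m hν L.1 L.2.1 L.2.2).2.2).symm
    · rintro ⟨j, l⟩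
      have hlen : l.1.length = t + m * ν := by
        have := congrArg Multiset.card l.2.1
        rwa [Multiset.coe_card, card_M] at this
      have hub : ∀ a ∈ l.1, a ≤ m := fun a ha => mem_M (l.2.1 ▸ Multiset.mem_coe.2 ha)
      have hp : j.val ≤ l.1.length := by omega
      obtain ⟨h1, h2⟩ := fwd_inv ν m j.val hν l.1 hub hp
      exact Prod.ext (Fin.ext h1) (Subtype.ext h2)
  rw [Nat.card_congr key, Nat.card_prod, Nat.card_eq_fintype_card, Fintype.card_fin]


lemma card_zero (ν t : ℕ) :
    Nat.card {l : List ℕ // (↑l : Multiset ℕ) = stirlingMultiset ν t 0 ∧ IsSmooth l} = 1 := by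
  have hM : stirlingMultiset ν t 0 = (↑(List.replicate t 0) : Multiset ℕ) := by
    simp [stirlingMultiset, Multiset.coe_replicate]
  have hch : ∀ l : List ℕ, (↑l : Multiset ℕ) = stirlingMultiset ν t 0 → l = List.replicate t 0 := by
    intro l hl
    rw [hM, Multiset.coe_eq_coe, List.perm_replicate] at hl
    exact hl
  have hsm : IsSmooth (List.replicate t 0) := by
    have h0 : ∀ j, (List.replicate t 0).getD j 0 = 0 := by
      intro j
      rcases lt_or_ge j t with h | h
      · rw [List.getD_eq_getElem _ _ (by simpa using h), List.getElem_replicate]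
      · rw [List.getD_eq_default _ _ (by simpa using h)]
    intro i m k _ _ _ _
    rw [h0, h0]
  rw [Nat.card_eq_one_iff_unique]
  constructor
  · exact ⟨fun a b => Subtype.ext ((hch a.1 a.2.1).trans (hch b.1 b.2.1).symm)⟩
  · exact ⟨⟨List.replicate t 0, by rw [hM], hsm⟩⟩

end StirlingProof

/-- The number of `(ν,t,[n])`-Stirling permutations equals
`∏_{k=0}^{n-1} (kν + t + 1)`. -/
theorem stmt0 (ν t n : ℕ) (hν : 1 ≤ ν) :
    Nat.card {l : List ℕ // (l : Multiset ℕ) = stirlingMultiset ν t n ∧ IsSmooth l}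
      = ∏ k ∈ Finset.range n, (k * ν + t + 1) := by
  induction n with
  | zero => simpa using StirlingProof.card_zero ν t
  | succ n ih =>
    rw [StirlingProof.card_step ν t n hν, ih, Finset.prod_range_succ]
    ring
end

section
/- Define numbers E(n,k) by the recurrence E(n,k) = (k+s)·E(n-1,k) + (νn - k + t + 1 - ν)·E(n-1,k-1) + δ_{k0}δ_{n0}, with E(n,k) = 0 if n < 0 or k < 0. Then the number of (ν,t,[n])-Stirling permutations with exactly k ascents equals E(n,k) with s = 1. -/
/-- The number of ascents of a word. -/
def ascents (l : List ℕ) : ℕ :=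
  ((Finset.range (l.length - 1)).filter (fun i => l.getD i 0 < l.getD (i + 1) 0)).card

namespace StirlingAux

/-! ### Part 1: recursive ascent counting and block insertion -/

/-- insert a block of `ν` copies of `x` at gap `i` -/
def ins (ν x : ℕ) (w : List ℕ) (i : ℕ) : List ℕ :=
  w.take i ++ List.replicate ν x ++ w.drop i

/-- recursive ascent counter -/
def asc : List ℕ → ℕ
  | [] => 0
  | [_] => 0
  | a :: b :: l => (if a < b then 1 else 0) + asc (b :: l)

lemma asc_cons (a : ℕ) (l : List ℕ) :
    asc (a :: l) = (if 0 < l.length ∧ a < l.getD 0 0 then 1 else 0) + asc l := by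
  cases l with
  | nil => simp [asc]
  | cons b l => simp [asc, List.getD_cons_zero]

lemma getD_block0 {ν x : ℕ} (hν : 0 < ν) (v : List ℕ) :
    (List.replicate ν x ++ v).getD 0 0 = x := by
  rw [List.getD_append _ _ _ 0 (by simpa using hν),
    List.getD_eq_getElem _ _ (by simpa using hν)]
  simp

lemma ascents_eq_asc (l : List ℕ) : ascents l = asc l := by
  induction l with
  | nil => simp [ascents, asc]
  | cons a l ih =>
    cases l with
    | nil => simp [ascents, asc]
    | cons b l =>
      rw [asc_cons]
      simp only [ascents, List.length_cons, Finset.card_filter] at ih ⊢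
      rw [show l.length + 1 + 1 - 1 = l.length + 1 by omega, Finset.sum_range_succ']
      simp only [List.getD_cons_succ, List.getD_cons_zero]
      rw [show l.length + 1 - 1 = l.length by simp] at ih
      simp only [List.getD_cons_succ] at ih
      rw [ih]
      have : ((0:ℕ) < l.length + 1 ∧ a < b) ↔ a < b := by omega
      rw [if_congr this rfl rfl]
      omega

lemma asc_replicate_append (ν x : ℕ) (v : List ℕ) (hx : ∀ a ∈ v, a < x) :
    asc (List.replicate ν x ++ v) = asc v := by
  induction ν with
  | zero => simp
  | succ ν ih =>
    rw [show List.replicate (ν+1) x ++ v = x :: (List.replicate ν x ++ v) by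
      simp [List.replicate_succ]]
    rw [asc_cons, ih]
    rcases Nat.eq_zero_or_pos ν with hν | hν
    · subst hν
      simp only [List.replicate_zero, List.nil_append]
      rcases v with _ | ⟨c, v⟩
      · simp
      · have h1 : (c :: v).getD 0 0 = c := List.getD_cons_zero
        have hcx : c < x := hx c (by simp)
        have : ¬ (0 < (c :: v).length ∧ x < (c :: v).getD 0 0) := by
          rw [h1]; rintro ⟨-, h2⟩; omega
        rw [if_neg this]; omega
    · rw [getD_block0 hν]
      have : ¬ (0 < (List.replicate ν x ++ v).length ∧ x < x) := by
        rintro ⟨-, h2⟩; omega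
      rw [if_neg this]; omega

/-- gap-cost: 0 if inserting the max block at gap `i` preserves ascent count, 1 otherwise -/
def gcost (w : List ℕ) (i : ℕ) : ℕ :=
  if i = 0 ∨ (i < w.length ∧ w.getD (i-1) 0 < w.getD i 0) then 0 else 1

lemma asc_ins (ν x : ℕ) (hν : 1 ≤ ν) :
    ∀ (i : ℕ) (w : List ℕ), i ≤ w.length → (∀ a ∈ w, a < x) →
      asc (ins ν x w i) = asc w + gcost w i := by
  intro i
  induction i with
  | zero =>
    intro w _ hx
    simp only [ins, List.take_zero, List.nil_append, List.drop_zero, gcost]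
    rw [asc_replicate_append ν x w hx]
    simp
  | succ i ih =>
    intro w hi hx
    rcases w with _ | ⟨a, w⟩
    · simp at hi
    have hx' : ∀ b ∈ w, b < x := fun b hb => hx b (by simp [hb])
    have ha : a < x := hx a (by simp)
    have hiw : i ≤ w.length := by simpa using hi
    have hins : ins ν x (a :: w) (i+1) = a :: ins ν x w i := by
      simp [ins, List.take_succ_cons, List.drop_succ_cons]
    rw [hins, asc_cons]
    have hlen : (ins ν x w i).length = w.length + ν := by
      simp only [ins, List.length_append, List.length_take, List.length_replicate,
        List.length_drop]
      omega
    rcases Nat.eq_zero_or_pos i with h0 | hpos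
    · subst h0
      have hget : (ins ν x w 0).getD 0 0 = x := by
        simp only [ins, List.take_zero, List.nil_append]
        exact getD_block0 hν w
      rw [asc_cons a w]
      have hca : (0:ℕ) < (ins ν x w 0).length ∧ a < (ins ν x w 0).getD 0 0 := by
        rw [hget, hlen]; exact ⟨by omega, ha⟩
      rw [if_pos hca]
      have hasc0 : asc (ins ν x w 0) = asc w := by
        simp only [ins, List.take_zero, List.nil_append, List.drop_zero]
        exact asc_replicate_append ν x w hx'
      rw [hasc0]
      have e0 : (a :: w).getD 0 0 = a := List.getD_cons_zero
      have e1 : (a :: w).getD 1 0 = w.getD 0 0 := List.getD_cons_succ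
      by_cases h : 0 < w.length ∧ a < w.getD 0 0
      · rw [if_pos h]
        have : gcost (a :: w) 1 = 0 := by
          simp only [gcost]
          rw [if_pos (Or.inr ⟨by simp; omega, by rw [show (1:ℕ)-1 = 0 from rfl, e0, e1]; exact h.2⟩)]
        rw [this]; omega
      · rw [if_neg h]
        have : gcost (a :: w) 1 = 1 := by
          simp only [gcost]
          rw [if_neg]
          rintro (h1 | ⟨h1, h2⟩)
          · omega
          · rw [show (1:ℕ)-1 = 0 from rfl, e0, e1] at h2
            exact h ⟨by simp at h1; omega, h2⟩
        rw [this]; omega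
    · -- i ≥ 1
      have hwpos : 0 < w.length := by omega
      have hget : (ins ν x w i).getD 0 0 = w.getD 0 0 := by
        simp only [ins]
        rw [List.append_assoc]
        rw [List.getD_append _ _ _ 0 (by simp [List.length_take]; omega)]
        rw [List.getD_eq_getElem _ _ (by simp [List.length_take]; omega),
          List.getD_eq_getElem _ _ (by omega)]
        simp [List.getElem_take]
      rw [ih w hiw hx', hget, hlen]
      have hc : gcost (a :: w) (i+1) = gcost w i := by
        rcases i with _ | j
        · omega
        simp only [gcost]
        have e1 : (a :: w).getD (j+1+1-1) 0 = w.getD (j+1-1) 0 := by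
          rw [show j+1+1-1 = j+1 from rfl, show j+1-1 = j from rfl]
          exact List.getD_cons_succ
        have e2 : (a :: w).getD (j+1+1) 0 = w.getD (j+1) 0 := List.getD_cons_succ
        rw [e1, e2]
        by_cases h : j+1 < w.length ∧ w.getD (j+1-1) 0 < w.getD (j+1) 0
        · rw [if_pos (Or.inr ⟨by simp; omega, h.2⟩), if_pos (Or.inr h)]
        · rw [if_neg, if_neg]
          · rintro (hh | hh); omega; exact h hh
          · rintro (hh | hh); omega; exact h ⟨by simp at hh; omega, hh.2⟩
      rw [hc, asc_cons a w]
      have hiff : ((0:ℕ) < w.length + ν ∧ a < w.getD 0 0)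
          ↔ (0 < w.length ∧ a < w.getD 0 0) := by
        constructor
        · rintro ⟨h1, h2⟩; exact ⟨hwpos, h2⟩
        · rintro ⟨h1, h2⟩; exact ⟨by omega, h2⟩
      rw [if_congr hiff rfl rfl]
      omega

/-! ### Part 2: smoothness lemmas -/

lemma length_ins (ν x : ℕ) (w : List ℕ) (i : ℕ) (hi : i ≤ w.length) :
    (ins ν x w i).length = w.length + ν := by
  simp only [ins, List.length_append, List.length_take, List.length_replicate,
    List.length_drop]
  omega

lemma getD_ins (ν x : ℕ) (w : List ℕ) (i : ℕ) (hi : i ≤ w.length) (j : ℕ) :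
    (ins ν x w i).getD j 0 =
      if j < i then w.getD j 0 else if j < i + ν then x else w.getD (j - ν) 0 := by
  have hlt : (w.take i).length = i := by simp; omega
  rcases lt_or_ge j i with h1 | h1
  · rw [if_pos h1, ins, List.append_assoc,
      List.getD_append _ _ _ _ (by omega),
      List.getD_eq_getElem _ _ (by omega), List.getElem_take,
      List.getD_eq_getElem _ _ (by omega)]
  · rw [if_neg (by omega), ins, List.append_assoc,
      List.getD_append_right _ _ _ _ (by omega), hlt]
    rcases lt_or_ge j (i + ν) with h2 | h2
    · rw [if_pos h2, List.getD_append _ _ _ _ (by simp; omega),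
        List.getD_eq_getElem _ _ (by simp; omega), List.getElem_replicate]
    · rw [if_neg (by omega), List.getD_append_right _ _ _ _ (by simp; omega),
        List.length_replicate]
      rcases lt_or_ge (j - ν) w.length with h3 | h3
      · rw [List.getD_eq_getElem _ _ (by simp; omega), List.getElem_drop,
          List.getD_eq_getElem _ _ (by omega)]
        congr 1
        omega
      · rw [List.getD_eq_default _ _ (by simp; omega),
          List.getD_eq_default _ _ (by omega)]

lemma mem_of_getD {w : List ℕ} {j : ℕ} (h : j < w.length) : w.getD j 0 ∈ w := by
  rw [List.getD_eq_getElem _ _ h]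
  exact List.getElem_mem h

lemma smooth_ins {ν x : ℕ} {w : List ℕ} {i : ℕ} (hν : 1 ≤ ν)
    (hw : IsSmooth w) (hlt : ∀ a ∈ w, a < x) (hi : i ≤ w.length) :
    IsSmooth (ins ν x w i) := by
  intro p m q hpm hmq hq hpq
  rw [length_ins ν x w i hi] at hq
  simp only [getD_ins ν x w i hi] at hpq ⊢
  have hval : ∀ j, j < w.length → w.getD j 0 < x := fun j hj => hlt _ (mem_of_getD hj)
  by_cases hp1 : p < i
  · rw [if_pos hp1] at hpq ⊢
    have hpw : w.getD p 0 < x := hval p (by omega)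
    by_cases hq1 : q < i
    · rw [if_pos hq1] at hpq
      rw [if_pos (by omega : m < i)]
      exact hw p m q hpm hmq (by omega) hpq
    · rw [if_neg hq1] at hpq
      by_cases hq2 : q < i + ν
      · rw [if_pos hq2] at hpq; omega
      · rw [if_neg hq2] at hpq
        by_cases hm1 : m < i
        · rw [if_pos hm1]
          exact hw p m (q - ν) hpm (by omega) (by omega) hpq
        · rw [if_neg hm1]
          by_cases hm2 : m < i + ν
          · rw [if_pos hm2]; omega
          · rw [if_neg hm2]
            exact hw p (m - ν) (q - ν) (by omega) (by omega) (by omega) hpq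
  · rw [if_neg hp1] at hpq ⊢
    by_cases hp2 : p < i + ν
    · rw [if_pos hp2] at hpq ⊢
      by_cases hq1 : q < i
      · omega
      · rw [if_neg hq1] at hpq
        by_cases hq2 : q < i + ν
        · rw [if_neg (by omega : ¬ m < i), if_pos (by omega : m < i + ν)]
        · rw [if_neg hq2] at hpq
          have := hval (q - ν) (by omega)
          omega
    · rw [if_neg hp2] at hpq ⊢
      have hq1 : ¬ q < i := by omega
      have hq2 : ¬ q < i + ν := by omega
      rw [if_neg hq1, if_neg hq2] at hpq
      rw [if_neg (by omega : ¬ m < i), if_neg (by omega : ¬ m < i + ν)]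
      exact hw (p - ν) (m - ν) (q - ν) (by omega) (by omega) (by omega) hpq

lemma getD_append_mid (a b : List ℕ) (ν x : ℕ) (j : ℕ) :
    (a ++ b).getD j 0 =
      (a ++ List.replicate ν x ++ b).getD (if j < a.length then j else j + ν) 0 := by
  rcases lt_or_ge j a.length with h | h
  · rw [if_pos h, List.getD_append _ _ _ _ h, List.append_assoc,
      List.getD_append _ _ _ _ (by omega)]
  · rw [if_neg (by omega), List.getD_append_right _ _ _ _ h,
      List.getD_append_right _ _ _ _ (by simp; omega)]
    congr 1
    simp
    omega

lemma smooth_del {a b : List ℕ} {ν x : ℕ}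
    (h : IsSmooth (a ++ List.replicate ν x ++ b)) : IsSmooth (a ++ b) := by
  intro p m q hpm hmq hq hpq
  simp only [List.length_append] at hq
  set φ : ℕ → ℕ := fun j => if j < a.length then j else j + ν with hφ
  have hmono : ∀ u v : ℕ, u < v → φ u < φ v := by
    intro u v huv
    simp only [hφ]
    by_cases h1 : u < a.length <;> by_cases h2 : v < a.length <;> simp [h1, h2] <;> omega
  simp only [getD_append_mid a b ν x] at hpq ⊢
  exact h (φ p) (φ m) (φ q) (hmono _ _ hpm) (hmono _ _ hmq)
    (by simp only [hφ, List.length_append, List.length_replicate]; split <;> omega) hpq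

lemma smooth_tail {c : ℕ} {l : List ℕ} (h : IsSmooth (c :: l)) : IsSmooth l := by
  intro p m q hpm hmq hq hpq
  have := h (p+1) (m+1) (q+1) (by omega) (by omega) (by simp; omega)
  simp only [List.getD_cons_succ] at this
  exact this hpq

lemma contiguous {x : ℕ} : ∀ {l : List ℕ}, IsSmooth l → (∀ a ∈ l, a ≤ x) →
    1 ≤ l.count x →
    ∃ a b, l = a ++ List.replicate (l.count x) x ++ b ∧ x ∉ a ∧ x ∉ b := by
  intro l
  induction l with
  | nil => intro _ _ h; simp at h
  | cons c l ih =>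
    intro hs hub hc
    by_cases hcx : c = x
    · subst hcx
      have hcount : (c :: l).count c = l.count c + 1 := by
        simp [List.count_cons]
      rcases Nat.eq_zero_or_pos (l.count c) with h0 | h1
      · refine ⟨[], l, ?_, by simp, List.count_eq_zero.mp h0⟩
        rw [hcount, h0, List.nil_append, List.replicate_succ, List.replicate_zero]
        simp
      · obtain ⟨a', b', hdec, hxa, hxb⟩ := ih (smooth_tail hs)
          (fun a ha => hub a (by simp [ha])) h1
        have ha' : a' = [] := by
          rcases a' with _ | ⟨d, a''⟩
          · rfl
          exfalso
          have hd : d < c := by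
            have h2 : d ≤ c := hub d (by rw [hdec]; simp)
            have h3 : d ≠ c := fun h => hxa (by simp [h])
            omega
          have hdec' : l = d :: (a'' ++ List.replicate (l.count c) c ++ b') := by
            conv_lhs => rw [hdec]
            rfl
          have hK : (c :: l).getD (a''.length + 2) 0 = c := by
            rw [show a''.length + 2 = (a''.length + 1) + 1 from rfl, List.getD_cons_succ]
            conv_lhs => rw [hdec']
            rw [List.getD_cons_succ, List.append_assoc,
              List.getD_append_right _ _ _ _ (le_refl _), Nat.sub_self]
            exact getD_block0 h1 b'
          have h1' : (c :: l).getD 1 0 = d := by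
            rw [show (1:ℕ) = 0 + 1 from rfl, List.getD_cons_succ]
            conv_lhs => rw [hdec']
            exact List.getD_cons_zero
          have h0' : (c :: l).getD 0 0 = c := List.getD_cons_zero
          have hlen : a''.length + 2 < (c :: l).length := by
            have : l.length = (d :: (a'' ++ List.replicate (l.count c) c ++ b')).length := by
              rw [← hdec']
            simp only [List.length_cons, List.length_append, List.length_replicate] at this
            simp only [List.length_cons]
            omega
          have := hs 0 1 (a''.length + 2) (by omega) (by omega) hlen (by rw [h0', hK])
          rw [h0', h1'] at this
          omega
        subst ha'
        refine ⟨[], b', ?_, by simp, hxb⟩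
        rw [List.nil_append] at hdec
        rw [List.nil_append, hcount, List.replicate_succ, List.cons_append]
        conv_lhs => rw [hdec]
    · have hd : l.count x = (c :: l).count x := by
        rw [List.count_cons]; simp [hcx]
      obtain ⟨a', b', hdec, hxa, hxb⟩ := ih (smooth_tail hs)
        (fun a ha => hub a (by simp [ha])) (by rw [hd]; exact hc)
      refine ⟨c :: a', b', ?_, ?_, hxb⟩
      · rw [← hd, List.cons_append, List.cons_append, ← hdec]
      · simp only [List.mem_cons]
        rintro (h | h)
        · exact hcx h.symm
        · exact hxa h

/-! ### Part 3: multiset facts and extraction maps -/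

lemma stirling_zero (ν t : ℕ) : stirlingMultiset ν t 0 = Multiset.replicate t 0 := by
  simp [stirlingMultiset]

lemma stirling_succ (ν t n : ℕ) :
    stirlingMultiset ν t (n+1) = stirlingMultiset ν t n + Multiset.replicate ν (n+1) := by
  rw [stirlingMultiset, stirlingMultiset, Finset.sum_Icc_succ_top (by omega), add_assoc]

lemma card_stirling (ν t n : ℕ) :
    Multiset.card (stirlingMultiset ν t n) = ν * n + t := by
  induction n with
  | zero => simp [stirling_zero]
  | succ n ih => rw [stirling_succ]; simp [ih]; ring

lemma mem_stirling_le {ν t n a : ℕ} (h : a ∈ stirlingMultiset ν t n) : a ≤ n := by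
  rw [stirlingMultiset, Multiset.mem_add] at h
  rcases h with h | h
  · rw [Multiset.eq_of_mem_replicate h]; omega
  · rw [Multiset.mem_sum] at h
    obtain ⟨j, hj, hmem⟩ := h
    rw [Multiset.eq_of_mem_replicate hmem]
    exact (Finset.mem_Icc.mp hj).2

lemma count_stirling_top (ν t n : ℕ) :
    Multiset.count (n+1) (stirlingMultiset ν t (n+1)) = ν := by
  rw [stirling_succ, Multiset.count_add, Multiset.count_replicate, if_pos rfl,
    Multiset.count_eq_zero.mpr (fun h => by have := mem_stirling_le h; omega)]
  omega

def del (x : ℕ) (l : List ℕ) : List ℕ := l.filter (fun a => a ≠ x)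

def idx (x : ℕ) (l : List ℕ) : ℕ := (l.takeWhile (fun a => a ≠ x)).length

lemma del_decomp {x : ℕ} {a b : List ℕ} (ν : ℕ) (ha : x ∉ a) (hb : x ∉ b) :
    del x (a ++ List.replicate ν x ++ b) = a ++ b := by
  simp only [del, List.filter_append]
  have hrep : (List.replicate ν x).filter (fun a => decide (a ≠ x)) = [] := by
    induction ν with
    | zero => simp
    | succ m ih => rw [List.replicate_succ, List.filter_cons]; simpa using ih
  rw [hrep, List.append_nil,
    List.filter_eq_self.mpr (fun c hc => by simp; exact fun h => ha (h ▸ hc)),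
    List.filter_eq_self.mpr (fun c hc => by simp; exact fun h => hb (h ▸ hc))]

lemma takeWhile_decomp {x : ℕ} : ∀ (a : List ℕ) (r : List ℕ), x ∉ a →
    ((a ++ x :: r).takeWhile (fun c => c ≠ x)) = a := by
  intro a
  induction a with
  | nil => intro r _; simp
  | cons c a ih =>
    intro r hx
    have hcx : c ≠ x := fun h => hx (by simp [h])
    rw [List.cons_append, List.takeWhile_cons_of_pos (by simpa using hcx),
      ih r (fun h => hx (by simp [h]))]

lemma idx_decomp {x : ℕ} {a b : List ℕ} {ν : ℕ} (hν : 1 ≤ ν) (ha : x ∉ a) :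
    idx x (a ++ List.replicate ν x ++ b) = a.length := by
  obtain ⟨m, rfl⟩ : ∃ m, ν = m + 1 := ⟨ν - 1, by omega⟩
  rw [idx, List.append_assoc, show List.replicate (m+1) x ++ b = x :: (List.replicate m x ++ b) by
    rw [List.replicate_succ, List.cons_append], takeWhile_decomp a _ ha]

lemma ins_decomp (ν x : ℕ) (a b : List ℕ) :
    ins ν x (a ++ b) a.length = a ++ List.replicate ν x ++ b := by
  rw [ins, List.take_left, List.drop_left]

lemma coe_ins (ν x : ℕ) (w : List ℕ) (i : ℕ) :
    ((ins ν x w i : List ℕ) : Multiset ℕ) = (w : Multiset ℕ) + Multiset.replicate ν x := by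
  have : ((ins ν x w i : List ℕ) : Multiset ℕ) =
      (↑(w.take i) + ↑(List.replicate ν x) + ↑(w.drop i) : Multiset ℕ) := rfl
  rw [this, Multiset.coe_replicate]
  have h2 : ((w.take i : List ℕ) : Multiset ℕ) + ↑(w.drop i) = ↑w := by
    rw [show ((w : List ℕ) : Multiset ℕ) = ↑(w.take i ++ w.drop i) by rw [List.take_append_drop]]
    rfl
  rw [← h2, add_right_comm]

lemma coe_split (a b : List ℕ) (ν x : ℕ) :
    ((a ++ List.replicate ν x ++ b : List ℕ) : Multiset ℕ)
      = ↑(a ++ b) + Multiset.replicate ν x := by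
  have : ((a ++ List.replicate ν x ++ b : List ℕ) : Multiset ℕ)
      = (↑a + ↑(List.replicate ν x) + ↑b : Multiset ℕ) := rfl
  rw [this, Multiset.coe_replicate,
    show ((a ++ b : List ℕ) : Multiset ℕ) = (↑a + ↑b : Multiset ℕ) from rfl,
    add_right_comm]

/-! ### Part 4: the bijection and the counting -/

lemma finite_aux (M : Multiset ℕ) (P : List ℕ → Prop) :
    Finite {l : List ℕ // (l : Multiset ℕ) = M ∧ P l} := by
  have hmem : ∀ p : {l : List ℕ // (l : Multiset ℕ) = M ∧ P l},
      p.1 ∈ M.toList.permutations := by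
    intro p
    rw [List.mem_permutations, ← Multiset.coe_eq_coe, p.2.1, Multiset.coe_toList]
  haveI : Finite {x : List ℕ // x ∈ M.toList.permutations} :=
    (M.toList.permutations.finite_toSet).to_subtype
  refine Finite.of_injective
    (fun p => (⟨p.1, hmem p⟩ : {x : List ℕ // x ∈ M.toList.permutations})) ?_
  intro p q h
  rw [Subtype.mk.injEq] at h
  exact Subtype.ext h

lemma length_of_coe {ν t n : ℕ} {w : List ℕ} (h : (w : Multiset ℕ) = stirlingMultiset ν t n) :
    w.length = ν * n + t := by
  have hc := Multiset.coe_card w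
  rw [h, card_stirling] at hc
  omega

lemma mem_lt_of_coe {ν t n : ℕ} {w : List ℕ} (h : (w : Multiset ℕ) = stirlingMultiset ν t n) :
    ∀ a ∈ w, a < n + 1 := by
  intro a ha
  have : a ∈ stirlingMultiset ν t n := h ▸ Multiset.mem_coe.mpr ha
  have := mem_stirling_le this
  omega

lemma ins_spec (ν t : ℕ) (hν : 1 ≤ ν) {n : ℕ} {w : List ℕ}
    (h1 : (w : Multiset ℕ) = stirlingMultiset ν t n) (h2 : IsSmooth w)
    {i : ℕ} (hi : i ≤ ν * n + t) :
    ((ins ν (n+1) w i : List ℕ) : Multiset ℕ) = stirlingMultiset ν t (n+1) ∧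
    IsSmooth (ins ν (n+1) w i) ∧
    ascents (ins ν (n+1) w i) = ascents w + gcost w i ∧
    del (n+1) (ins ν (n+1) w i) = w ∧
    idx (n+1) (ins ν (n+1) w i) = i := by
  have hlen : w.length = ν * n + t := length_of_coe h1
  have hmem : ∀ a ∈ w, a < n + 1 := mem_lt_of_coe h1
  have hxw : (n+1) ∉ w := fun h => by have := hmem _ h; omega
  have hxtake : (n+1) ∉ w.take i := fun h => hxw (List.mem_of_mem_take h)
  have hxdrop : (n+1) ∉ w.drop i := fun h => hxw (List.mem_of_mem_drop h)
  refine ⟨?_, smooth_ins hν h2 hmem (by omega), ?_, ?_, ?_⟩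
  · rw [coe_ins, h1, ← stirling_succ]
  · rw [ascents_eq_asc, ascents_eq_asc, asc_ins ν (n+1) hν i w (by omega) hmem]
  · rw [show ins ν (n+1) w i = w.take i ++ List.replicate ν (n+1) ++ w.drop i from rfl,
      del_decomp ν hxtake hxdrop, List.take_append_drop]
  · rw [show ins ν (n+1) w i = w.take i ++ List.replicate ν (n+1) ++ w.drop i from rfl,
      idx_decomp hν hxtake, List.length_take]
    omega

lemma del_spec (ν t : ℕ) (hν : 1 ≤ ν) {n : ℕ} {l : List ℕ}
    (h1 : (l : Multiset ℕ) = stirlingMultiset ν t (n+1)) (h2 : IsSmooth l) :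
    ((del (n+1) l : List ℕ) : Multiset ℕ) = stirlingMultiset ν t n ∧
    IsSmooth (del (n+1) l) ∧ idx (n+1) l ≤ ν * n + t ∧
    ins ν (n+1) (del (n+1) l) (idx (n+1) l) = l := by
  have hcount : l.count (n+1) = ν := by
    rw [← Multiset.coe_count, h1, count_stirling_top]
  have hub : ∀ a ∈ l, a ≤ n+1 := fun a ha => mem_stirling_le (h1 ▸ Multiset.mem_coe.mpr ha)
  obtain ⟨a, b, hdec, hxa, hxb⟩ := contiguous h2 hub (by omega)
  rw [hcount] at hdec
  have hdel : del (n+1) l = a ++ b := by rw [hdec]; exact del_decomp ν hxa hxb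
  have hidx : idx (n+1) l = a.length := by rw [hdec]; exact idx_decomp hν hxa
  have hco : ((a ++ b : List ℕ) : Multiset ℕ) = stirlingMultiset ν t n := by
    have h := h1
    rw [hdec, coe_split, stirling_succ] at h
    exact add_right_cancel h
  refine ⟨by rw [hdel]; exact hco, by rw [hdel]; exact smooth_del (hdec ▸ h2), ?_, ?_⟩
  · rw [hidx]
    have h3 : (a ++ b).length = ν * n + t := length_of_coe hco
    simp only [List.length_append] at h3
    omega
  · rw [hdel, hidx, ins_decomp, ← hdec]

lemma ascents_le (w : List ℕ) : ascents w ≤ w.length - 1 :=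
  le_trans (Finset.card_filter_le _ _) (by rw [Finset.card_range])

lemma gcost_zero_or_one (w : List ℕ) (i : ℕ) : gcost w i = 0 ∨ gcost w i = 1 := by
  unfold gcost
  split
  · exact Or.inl rfl
  · exact Or.inr rfl

lemma sum_gcost0 (w : List ℕ) :
    (∑ i ∈ Finset.range (w.length+1), if gcost w i = 0 then 1 else 0) = ascents w + 1 := by
  rw [Finset.sum_range_succ']
  have h0 : gcost w 0 = 0 := by simp [gcost]
  rw [h0, if_pos rfl]
  have hmain : (∑ j ∈ Finset.range w.length, if gcost w (j+1) = 0 then 1 else 0)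
      = ascents w := by
    have hg : ∀ j, gcost w (j+1)
        = if j + 1 < w.length ∧ w.getD j 0 < w.getD (j+1) 0 then 0 else 1 := by
      intro j
      simp [gcost]
    rcases Nat.eq_zero_or_pos w.length with h | h
    · rw [h]
      simp [ascents, h]
    · obtain ⟨m, hm⟩ : ∃ m, w.length = m+1 := ⟨w.length - 1, by omega⟩
      rw [hm, Finset.sum_range_succ]
      have hlast : (if gcost w (m+1) = 0 then 1 else 0) = 0 := by
        rw [hg m]
        have hno : ¬ (m + 1 < w.length ∧ w.getD m 0 < w.getD (m+1) 0) := by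
          rw [hm]; rintro ⟨hh, -⟩; omega
        rw [if_neg hno]
        simp
      rw [hlast, add_zero, ascents, hm, show m+1-1 = m from rfl, Finset.card_filter]
      refine Finset.sum_congr rfl (fun j hj => ?_)
      have hjm : j < m := Finset.mem_range.mp hj
      rw [hg j]
      have hiff : (j + 1 < w.length ∧ w.getD j 0 < w.getD (j+1) 0)
          ↔ w.getD j 0 < w.getD (j+1) 0 := by
        constructor
        · exact fun h => h.2
        · exact fun h => ⟨by omega, h⟩
      rw [if_congr hiff rfl rfl]
      by_cases hcond : w.getD j 0 < w.getD (j+1) 0 <;> simp [hcond]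
  rw [hmain]

lemma sum_gcost1 (w : List ℕ) :
    (∑ i ∈ Finset.range (w.length+1), if gcost w i = 1 then 1 else 0)
      = w.length - ascents w := by
  have htot : (∑ i ∈ Finset.range (w.length+1),
      ((if gcost w i = 0 then 1 else 0) + (if gcost w i = 1 then 1 else 0))) = w.length + 1 := by
    have hone : ∀ i ∈ Finset.range (w.length+1),
        ((if gcost w i = 0 then 1 else 0) + (if gcost w i = 1 then (1:ℕ) else 0)) = 1 :=
      fun i _ => by rcases gcost_zero_or_one w i with h | h <;> simp [h]
    rw [Finset.sum_congr rfl hone, Finset.sum_const, Finset.card_range, smul_eq_mul, mul_one]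
  rw [Finset.sum_add_distrib, sum_gcost0] at htot
  have := ascents_le w
  omega

lemma sum_gcost (w : List ℕ) (k' : ℕ) :
    (∑ i ∈ Finset.range (w.length+1), if ascents w + gcost w i = k' then 1 else 0)
      = if k' = ascents w then ascents w + 1
        else if k' = ascents w + 1 then w.length - ascents w else 0 := by
  by_cases h1 : k' = ascents w
  · rw [if_pos h1, ← sum_gcost0]
    refine Finset.sum_congr rfl (fun i _ => ?_)
    rcases gcost_zero_or_one w i with h | h <;> simp [h, h1] <;> omega
  · rw [if_neg h1]
    by_cases h2 : k' = ascents w + 1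
    · rw [if_pos h2, ← sum_gcost1]
      refine Finset.sum_congr rfl (fun i _ => ?_)
      rcases gcost_zero_or_one w i with h | h <;> simp [h, h2] <;> omega
    · rw [if_neg h2]
      rw [Finset.sum_eq_zero]
      intro i _
      rcases gcost_zero_or_one w i with h | h <;> rw [h] <;> rw [if_neg (by omega)]

lemma sum_ite_eq_card {α : Type} [Fintype α] (p : α → Prop) [DecidablePred p] (c : ℕ) :
    (∑ a : α, if p a then c else 0) = c * Nat.card {a : α // p a} := by
  rw [Nat.card_eq_fintype_card, Fintype.card_subtype, Finset.card_filter, Finset.mul_sum]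
  exact Finset.sum_congr rfl (fun a _ => by by_cases h : p a <;> simp [h])

lemma card_T_asc (ν t n k : ℕ) :
    Nat.card {w : {w : List ℕ // (w : Multiset ℕ) = stirlingMultiset ν t n ∧ IsSmooth w} //
        ascents w.1 = k}
      = Nat.card {l : List ℕ // (l : Multiset ℕ) = stirlingMultiset ν t n ∧
          IsSmooth l ∧ ascents l = k} :=
  Nat.card_congr ((Equiv.subtypeSubtypeEquivSubtypeInter
      (fun w : List ℕ => (w : Multiset ℕ) = stirlingMultiset ν t n ∧ IsSmooth w)
      (fun w : List ℕ => ascents w = k)).trans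
    (Equiv.subtypeEquivRight fun l => and_assoc))

lemma nat_card_subtype_prod {α β : Type} [Fintype α] [Fintype β] (q : α → β → Prop)
    [∀ a b, Decidable (q a b)] :
    Nat.card {p : α × β // q p.1 p.2} = ∑ a : α, ∑ b : β, if q a b then 1 else 0 := by
  classical
  rw [Nat.card_eq_fintype_card, Fintype.card_subtype, Finset.card_filter, Fintype.sum_prod_type]

set_option maxHeartbeats 1000000 in
lemma card_master (ν t : ℕ) (hν : 1 ≤ ν) (n k' : ℕ)
    [Fintype {w : List ℕ // (w : Multiset ℕ) = stirlingMultiset ν t n ∧ IsSmooth w}] :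
    Nat.card {l : List ℕ // (l : Multiset ℕ) = stirlingMultiset ν t (n+1) ∧
        IsSmooth l ∧ ascents l = k'}
      = ∑ w : {w : List ℕ // (w : Multiset ℕ) = stirlingMultiset ν t n ∧ IsSmooth w},
          (if k' = ascents w.1 then ascents w.1 + 1
           else if k' = ascents w.1 + 1 then (ν*n+t) - ascents w.1 else 0) := by
  classical
  have E : {l : List ℕ // (l : Multiset ℕ) = stirlingMultiset ν t (n+1) ∧
      IsSmooth l ∧ ascents l = k'} ≃
      {p : {w : List ℕ // (w : Multiset ℕ) = stirlingMultiset ν t n ∧ IsSmooth w}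
          × Fin (ν*n+t+1) // ascents (ins ν (n+1) p.1.1 p.2.1) = k'} :=
    { toFun := fun l =>
        ⟨(⟨del (n+1) l.1, (del_spec ν t hν l.2.1 l.2.2.1).1,
            (del_spec ν t hν l.2.1 l.2.2.1).2.1⟩,
          ⟨idx (n+1) l.1, by
            have := (del_spec ν t hν l.2.1 l.2.2.1).2.2.1; omega⟩),
          by
            have h := (del_spec ν t hν l.2.1 l.2.2.1).2.2.2
            simp only [h]
            exact l.2.2.2⟩
      invFun := fun p =>
        ⟨ins ν (n+1) p.1.1.1 p.1.2.1,
          (ins_spec ν t hν p.1.1.2.1 p.1.1.2.2 (by omega : (p.1.2 : ℕ) ≤ ν*n+t)).1,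
          (ins_spec ν t hν p.1.1.2.1 p.1.1.2.2 (by omega : (p.1.2 : ℕ) ≤ ν*n+t)).2.1,
          p.2⟩
      left_inv := fun l => Subtype.ext (del_spec ν t hν l.2.1 l.2.2.1).2.2.2
      right_inv := by
        rintro ⟨⟨⟨w, hw1, hw2⟩, ⟨i, hi⟩⟩, hp⟩
        have hspec := ins_spec ν t hν hw1 hw2 (by omega : i ≤ ν*n+t)
        apply Subtype.ext
        simp only
        rw [Prod.mk.injEq]
        constructor
        · exact Subtype.ext hspec.2.2.2.1
        · exact Fin.ext hspec.2.2.2.2 }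
  rw [Nat.card_congr E,
    nat_card_subtype_prod (fun w : {w : List ℕ // (w : Multiset ℕ) = stirlingMultiset ν t n
      ∧ IsSmooth w} => fun i : Fin (ν*n+t+1) => ascents (ins ν (n+1) w.1 i.1) = k')]
  refine Finset.sum_congr rfl (fun w _ => ?_)
  have hlen : w.1.length = ν*n+t := length_of_coe w.2.1
  rw [show (∑ i : Fin (ν*n+t+1), if ascents (ins ν (n+1) w.1 i.1) = k' then 1 else 0)
      = ∑ i ∈ Finset.range (ν*n+t+1), if ascents (ins ν (n+1) w.1 i) = k' then 1 else 0
    from Fin.sum_univ_eq_sum_range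
      (fun j => if ascents (ins ν (n+1) w.1 j) = k' then 1 else 0) (ν*n+t+1)]
  have hstep : (∑ i ∈ Finset.range (ν*n+t+1), if ascents (ins ν (n+1) w.1 i) = k' then 1 else 0)
      = ∑ i ∈ Finset.range (ν*n+t+1), if ascents w.1 + gcost w.1 i = k' then 1 else 0 := by
    refine Finset.sum_congr rfl (fun i hi => ?_)
    rw [(ins_spec ν t hν w.2.1 w.2.2 (by
      have := Finset.mem_range.mp hi; omega : i ≤ ν*n+t)).2.2.1]
  rw [hstep, show ν*n+t+1 = w.1.length + 1 by omega, sum_gcost, hlen]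

lemma card_succ_zero (ν t : ℕ) (hν : 1 ≤ ν) (n : ℕ) :
    Nat.card {l : List ℕ // (l : Multiset ℕ) = stirlingMultiset ν t (n+1) ∧
        IsSmooth l ∧ ascents l = 0}
      = Nat.card {l : List ℕ // (l : Multiset ℕ) = stirlingMultiset ν t n ∧
          IsSmooth l ∧ ascents l = 0} := by
  classical
  haveI : Finite {w : List ℕ // (w : Multiset ℕ) = stirlingMultiset ν t n ∧ IsSmooth w} :=
    finite_aux _ _
  haveI : Fintype {w : List ℕ // (w : Multiset ℕ) = stirlingMultiset ν t n ∧ IsSmooth w} :=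
    Fintype.ofFinite _
  rw [card_master ν t hν n 0]
  rw [Finset.sum_congr rfl (fun w _ => show _ = if ascents w.1 = 0 then 1 else 0 by
    by_cases h : ascents w.1 = 0
    · simp [h]
    · rw [if_neg (by omega), if_neg (by omega), if_neg h])]
  rw [sum_ite_eq_card, card_T_asc, one_mul]

lemma card_succ_succ (ν t : ℕ) (hν : 1 ≤ ν) (n k : ℕ) :
    Nat.card {l : List ℕ // (l : Multiset ℕ) = stirlingMultiset ν t (n+1) ∧
        IsSmooth l ∧ ascents l = k+1}
      = (k+2) * Nat.card {l : List ℕ // (l : Multiset ℕ) = stirlingMultiset ν t n ∧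
          IsSmooth l ∧ ascents l = k+1}
        + ((ν*n+t) - k) * Nat.card {l : List ℕ // (l : Multiset ℕ) = stirlingMultiset ν t n ∧
            IsSmooth l ∧ ascents l = k} := by
  classical
  haveI : Finite {w : List ℕ // (w : Multiset ℕ) = stirlingMultiset ν t n ∧ IsSmooth w} :=
    finite_aux _ _
  haveI : Fintype {w : List ℕ // (w : Multiset ℕ) = stirlingMultiset ν t n ∧ IsSmooth w} :=
    Fintype.ofFinite _
  rw [card_master ν t hν n (k+1)]
  rw [Finset.sum_congr rfl (fun w _ => show _ =
      (if ascents w.1 = k+1 then k+2 else 0) + (if ascents w.1 = k then (ν*n+t) - k else 0) by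
    by_cases h1 : ascents w.1 = k+1
    · rw [if_pos (by omega : k+1 = ascents w.1), if_pos h1, if_neg (by omega : ¬ ascents w.1 = k),
        h1]
      try omega
    · rw [if_neg (by omega : ¬ k+1 = ascents w.1), if_neg h1]
      by_cases h2 : ascents w.1 = k
      · rw [if_pos (by omega : k+1 = ascents w.1 + 1), if_pos h2, h2]
        try omega
      · rw [if_neg (by omega : ¬ k+1 = ascents w.1 + 1), if_neg h2])]
  rw [Finset.sum_add_distrib, sum_ite_eq_card, sum_ite_eq_card, card_T_asc, card_T_asc]

lemma card_vanish (ν t n k : ℕ) (hk : 1 ≤ k) (hL : ν*n+t ≤ k) :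
    Nat.card {l : List ℕ // (l : Multiset ℕ) = stirlingMultiset ν t n ∧
        IsSmooth l ∧ ascents l = k} = 0 := by
  haveI : IsEmpty {l : List ℕ // (l : Multiset ℕ) = stirlingMultiset ν t n ∧
      IsSmooth l ∧ ascents l = k} := by
    constructor
    rintro ⟨l, h1, h2, h3⟩
    have hlen : l.length = ν*n+t := length_of_coe h1
    have := ascents_le l
    omega
  exact Nat.card_of_isEmpty

lemma eq_replicate_of_coe {t : ℕ} {l : List ℕ}
    (h : (l : Multiset ℕ) = Multiset.replicate t 0) : l = List.replicate t 0 := by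
  rw [← Multiset.coe_replicate, Multiset.coe_eq_coe, List.perm_replicate] at h
  exact h

lemma getD_replicate_zero (t j : ℕ) : (List.replicate t (0:ℕ)).getD j 0 = 0 := by
  rcases lt_or_ge j t with h | h
  · rw [List.getD_eq_getElem _ _ (by simpa using h), List.getElem_replicate]
  · rw [List.getD_eq_default _ _ (by simpa using h)]

lemma smooth_replicate (t : ℕ) : IsSmooth (List.replicate t 0) := by
  intro i m k _ _ _ _
  rw [getD_replicate_zero]
  omega

lemma ascents_replicate (t : ℕ) : ascents (List.replicate t 0) = 0 := by
  rw [ascents, Finset.card_eq_zero, Finset.filter_eq_empty_iff]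
  intro i _
  rw [getD_replicate_zero, getD_replicate_zero]
  omega

lemma card_zero_zero (ν t : ℕ) :
    Nat.card {l : List ℕ // (l : Multiset ℕ) = stirlingMultiset ν t 0 ∧
        IsSmooth l ∧ ascents l = 0} = 1 := by
  haveI : Unique {l : List ℕ // (l : Multiset ℕ) = stirlingMultiset ν t 0 ∧
      IsSmooth l ∧ ascents l = 0} :=
    { default := ⟨List.replicate t 0,
        by rw [Multiset.coe_replicate, stirling_zero], smooth_replicate t, ascents_replicate t⟩
      uniq := fun l => Subtype.ext
        (eq_replicate_of_coe (l.2.1.trans (stirling_zero ν t))) }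
  exact Nat.card_unique

lemma card_zero_succ (ν t k : ℕ) :
    Nat.card {l : List ℕ // (l : Multiset ℕ) = stirlingMultiset ν t 0 ∧
        IsSmooth l ∧ ascents l = k+1} = 0 := by
  haveI : IsEmpty {l : List ℕ // (l : Multiset ℕ) = stirlingMultiset ν t 0 ∧
      IsSmooth l ∧ ascents l = k+1} := by
    constructor
    rintro ⟨l, h1, h2, h3⟩
    rw [stirling_zero] at h1
    rw [eq_replicate_of_coe h1, ascents_replicate] at h3
    omega
  exact Nat.card_of_isEmpty

end StirlingAux

open StirlingAux in
/-- The number of `(ν,t,[n])`-Stirling permutations with exactly `k` ascents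
equals the ν-order `(1,t)`-Eulerian number `E n k` defined by the recurrence
`E(n,k) = (k+s)·E(n-1,k) + (νn - k + t + 1 - ν)·E(n-1,k-1) + δ_{k0}δ_{n0}`
with `s = 1` and vanishing for negative indices. -/
theorem stmt1 (ν t n k : ℕ) (hν : 1 ≤ ν) (E : ℕ → ℕ → ℤ)
    (h00 : E 0 0 = 1) (h0k : ∀ k, E 0 (k + 1) = 0)
    (hn0 : ∀ n, E (n + 1) 0 = (0 + 1) * E n 0)
    (hrec : ∀ n k, E (n + 1) (k + 1) =
      (((k : ℤ) + 1) + 1) * E n (k + 1) +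
      ((ν : ℤ) * ((n : ℤ) + 1) - ((k : ℤ) + 1) + (t : ℤ) + 1 - (ν : ℤ)) * E n k) :
    (Nat.card {l : List ℕ // (l : Multiset ℕ) = stirlingMultiset ν t n ∧
        IsSmooth l ∧ ascents l = k} : ℤ) = E n k := by
  induction n generalizing k with
  | zero =>
    rcases k with _ | k
    · rw [card_zero_zero ν t, h00]
      norm_num
    · rw [card_zero_succ ν t k, h0k]
      norm_num
  | succ n ih =>
    rcases k with _ | k
    · rw [card_succ_zero ν t hν n, hn0, ih 0]
      ring
    · have h1 := ih (k+1)
      have h2 := ih k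
      rw [card_succ_succ ν t hν n k, hrec n k]
      rcases le_or_gt k (ν*n+t) with h | h
      · push_cast [h]
        rw [h1, h2]
        ring
      · have hc0 : Nat.card {l : List ℕ // (l : Multiset ℕ) = stirlingMultiset ν t n ∧
            IsSmooth l ∧ ascents l = k} = 0 := card_vanish ν t n k (by omega) (by omega)
        rw [hc0] at h2 ⊢
        rw [← h2]
        push_cast
        rw [h1]
        ring
end

section
/- The ν-order (s,t)-Eulerian numbers, defined by the recurrence E(n,k) = (k+s)·E(n-1,k) + (νn - k + t + 1 - ν)·E(n-1,k-1) + δ_{k0}δ_{n0} with E(n,k) = 0 for n < 0 or k < 0, satisfy ∑_{k=0}^{n} E(n,k) = ∏_{j=0}^{n-1} (jν + t + s) for all n ≥ 0. -/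
/-- The row sums of the ν-order `(s,t)`-Eulerian numbers, defined by the
recurrence `E(n,k) = (k+s)·E(n-1,k) + (νn - k + t + 1 - ν)·E(n-1,k-1)
+ δ_{k0}δ_{n0}` (vanishing for negative indices), are
`∏_{j=0}^{n-1} (jν + t + s)`. -/
theorem stmt2 (ν s t : ℚ) (E : ℕ → ℕ → ℚ)
    (h00 : E 0 0 = 1) (h0k : ∀ k, E 0 (k + 1) = 0)
    (hn0 : ∀ n, E (n + 1) 0 = (0 + s) * E n 0)
    (hrec : ∀ n k : ℕ, E (n + 1) (k + 1) =
      (((k : ℚ) + 1) + s) * E n (k + 1) +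
      (ν * ((n : ℚ) + 1) - ((k : ℚ) + 1) + t + 1 - ν) * E n k)
    (n : ℕ) :
    ∑ k ∈ Finset.range (n + 1), E n k = ∏ j ∈ Finset.range n, ((j : ℚ) * ν + t + s) := by
  have hvan : ∀ m k, m < k → E m k = 0 := by
    intro m
    induction m with
    | zero =>
      intro k hk
      cases k with
      | zero => omega
      | succ k => exact h0k k
    | succ m ihm =>
      intro k hk
      cases k with
      | zero => omega
      | succ k =>
        rw [hrec, ihm k (by omega), ihm (k + 1) (by omega)]
        ring
  induction n with
  | zero => simp [h00]
  | succ n ih =>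
    rw [Finset.prod_range_succ, ← ih]
    have hz : E n (n + 1) = 0 := hvan n (n + 1) (by omega)
    rw [Finset.sum_range_succ' (fun k => E (n + 1) k) (n + 1)]
    simp only [hrec, hn0]
    rw [Finset.sum_add_distrib]
    have h1 : ∑ k ∈ Finset.range (n + 1), (((k : ℚ) + 1) + s) * E n (k + 1)
        = (∑ k ∈ Finset.range (n + 1), ((k : ℚ) + s) * E n k) - s * E n 0 := by
      have h2 := Finset.sum_range_succ' (fun k => ((k : ℚ) + s) * E n k) (n + 1)
      rw [Finset.sum_range_succ (fun k => ((k : ℚ) + s) * E n k) (n + 1), hz] at h2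
      push_cast at h2 ⊢
      linarith [h2]
    have hsum : ∑ k ∈ Finset.range (n + 1),
        (((k : ℚ) + s) * E n k + (ν * ((n : ℚ) + 1) - ((k : ℚ) + 1) + t + 1 - ν) * E n k)
        = ∑ k ∈ Finset.range (n + 1), E n k * ((n : ℚ) * ν + t + s) :=
      Finset.sum_congr rfl (by intro k _; ring)
    rw [Finset.sum_add_distrib, ← Finset.sum_mul] at hsum
    linarith [hsum, h1]
end

section
/- For ν = 1, the (s,t)-Eulerian numbers admit the closed form E(n,k) = (1/k!) · ∑_{j=0}^{k} (-1)^{k-j} · C(k,j) · (n+s+t)^{\underline{k-j}} · (s+t)^{\overline{j}} · (s+j)^n, for n ≥ 0 and 0 ≤ k ≤ n, where x^{\underline{m}} denotes the falling factorial and x^{\overline{m}} the rising factorial. -/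
-- helper: desc (m+1) eval via left
lemma descL (m : ℕ) (y : ℚ) :
    (descPochhammer ℚ (m+1)).eval y = y * (descPochhammer ℚ m).eval (y - 1) := by
  rw [descPochhammer_succ_left]
  simp [Polynomial.eval_comp]

-- choose identity in ℚ
lemma chooseQ (k j : ℕ) (hj : j ≤ k) :
    ((k+1).choose j : ℚ) * (((k:ℚ) - j) + 1) = ((k:ℚ)+1) * (k.choose j : ℚ) := by
  have h := Nat.choose_mul_succ_eq k j
  have h2 : ((k : ℚ) - j) + 1 = ((k + 1 - j : ℕ) : ℚ) := by
    rw [Nat.cast_sub (by omega)]; push_cast; ring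
  rw [h2, ← Nat.cast_mul, ← h]
  push_cast; ring

-- pascal sum splitter
lemma pascalSum (f : ℕ → ℚ) (k : ℕ) :
    ∑ j ∈ Finset.range (k+2), ((k+1).choose j : ℚ) * f j
    = ∑ j ∈ Finset.range (k+2), (k.choose j : ℚ) * f j
      + ∑ j ∈ Finset.range (k+1), (k.choose j : ℚ) * f (j+1) := by
  rw [Finset.sum_range_succ' _ (k+1), Finset.sum_range_succ' _ (k+1)]
  simp only [Nat.choose_succ_succ, Nat.succ_eq_add_one, Nat.cast_add, add_mul,
    Finset.sum_add_distrib, Nat.choose_zero_right, Nat.cast_one]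
  ring

lemma baseS (x : ℚ) : ∀ k : ℕ,
    ∑ j ∈ Finset.range (k+2), (-1:ℚ)^(k+1-j) * ((k+1).choose j : ℚ) *
      (descPochhammer ℚ (k+1-j)).eval x * (ascPochhammer ℚ j).eval x = 0 := by
  intro k
  induction k with
  | zero =>
    simp [Finset.sum_range_succ, ascPochhammer_one, descPochhammer_one]
  | succ k ih =>
    show ∑ j ∈ Finset.range (k+3), (-1:ℚ)^(k+2-j) * ((k+2).choose j : ℚ) *
      (descPochhammer ℚ (k+2-j)).eval x * (ascPochhammer ℚ j).eval x = 0
    have e1 : ∑ j ∈ Finset.range (k+3), (-1:ℚ)^(k+2-j) * ((k+2).choose j : ℚ) *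
        (descPochhammer ℚ (k+2-j)).eval x * (ascPochhammer ℚ j).eval x
      = ∑ j ∈ Finset.range (k+3), ((k+2).choose j : ℚ) * ((-1:ℚ)^(k+2-j) *
        (descPochhammer ℚ (k+2-j)).eval x * (ascPochhammer ℚ j).eval x) := by
      apply Finset.sum_congr rfl; intro j _; ring
    rw [e1, pascalSum (fun j => (-1:ℚ)^(k+2-j) *
        (descPochhammer ℚ (k+2-j)).eval x * (ascPochhammer ℚ j).eval x) (k+1),
      Finset.sum_range_succ]
    have e2 : ((k+1).choose (k+2) : ℚ) = 0 := by
      norm_cast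
      exact Nat.choose_eq_zero_of_lt (by omega)
    rw [e2, zero_mul, add_zero, ← Finset.sum_add_distrib]
    have e3 : ∀ j ∈ Finset.range (k+2),
        ((k+1).choose j : ℚ) * ((-1:ℚ)^(k+2-j) *
          (descPochhammer ℚ (k+2-j)).eval x * (ascPochhammer ℚ j).eval x)
        + ((k+1).choose j : ℚ) * ((-1:ℚ)^(k+2-(j+1)) *
          (descPochhammer ℚ (k+2-(j+1))).eval x * (ascPochhammer ℚ (j+1)).eval x)
        = ((k:ℚ)+1) * ((-1:ℚ)^(k+1-j) * ((k+1).choose j : ℚ) *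
          (descPochhammer ℚ (k+1-j)).eval x * (ascPochhammer ℚ j).eval x) := by
      intro j hj
      simp only [Finset.mem_range] at hj
      have h1 : k+2-j = (k+1-j)+1 := by omega
      have h2 : k+2-(j+1) = k+1-j := by omega
      have hc : ((k+1-j : ℕ) : ℚ) = (k:ℚ)+1-(j:ℚ) := by
        rw [Nat.cast_sub (by omega)]; push_cast; ring
      rw [h1, h2, descPochhammer_succ_eval, ascPochhammer_succ_eval, pow_succ, hc]
      ring
    rw [Finset.sum_congr rfl e3, ← Finset.mul_sum, ih, mul_zero]

lemma sumrec (s t : ℚ) (n k : ℕ) :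
    ∑ j ∈ Finset.range (k+2), (-1:ℚ)^(k+1-j) * ((k+1).choose j : ℚ) *
        (descPochhammer ℚ (k+1-j)).eval ((n:ℚ)+1+s+t) * (ascPochhammer ℚ j).eval (s+t) * (s+(j:ℚ))^(n+1)
    = ((k:ℚ)+1+s) * ∑ j ∈ Finset.range (k+2), (-1:ℚ)^(k+1-j) * ((k+1).choose j : ℚ) *
        (descPochhammer ℚ (k+1-j)).eval ((n:ℚ)+s+t) * (ascPochhammer ℚ j).eval (s+t) * (s+(j:ℚ))^n
      + ((k:ℚ)+1) * ((n:ℚ)-(k:ℚ)+t) * ∑ j ∈ Finset.range (k+1), (-1:ℚ)^(k-j) * (k.choose j : ℚ) *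
        (descPochhammer ℚ (k-j)).eval ((n:ℚ)+s+t) * (ascPochhammer ℚ j).eval (s+t) * (s+(j:ℚ))^n := by
  rw [Finset.sum_range_succ, Finset.sum_range_succ ( fun j => (-1:ℚ)^(k+1-j) * ((k+1).choose j : ℚ) *
        (descPochhammer ℚ (k+1-j)).eval ((n:ℚ)+s+t) * (ascPochhammer ℚ j).eval (s+t) * (s+(j:ℚ))^n)]
  have e3 : ∀ j ∈ Finset.range (k+1),
      (-1:ℚ)^(k+1-j) * ((k+1).choose j : ℚ) *
        (descPochhammer ℚ (k+1-j)).eval ((n:ℚ)+1+s+t) * (ascPochhammer ℚ j).eval (s+t) * (s+(j:ℚ))^(n+1)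
      = ((k:ℚ)+1+s) * ((-1:ℚ)^(k+1-j) * ((k+1).choose j : ℚ) *
          (descPochhammer ℚ (k+1-j)).eval ((n:ℚ)+s+t) * (ascPochhammer ℚ j).eval (s+t) * (s+(j:ℚ))^n)
        + (((k:ℚ)+1) * ((n:ℚ)-(k:ℚ)+t)) * ((-1:ℚ)^(k-j) * (k.choose j : ℚ) *
          (descPochhammer ℚ (k-j)).eval ((n:ℚ)+s+t) * (ascPochhammer ℚ j).eval (s+t) * (s+(j:ℚ))^n) := by
    intro j hj
    simp only [Finset.mem_range] at hj
    have hjk : j ≤ k := by omega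
    have h1 : k+1-j = (k-j)+1 := by omega
    have hc : ((k-j : ℕ) : ℚ) = (k:ℚ)-(j:ℚ) := by
      rw [Nat.cast_sub hjk]
    have hch := chooseQ k j hjk
    have hy : (n:ℚ)+1+s+t-1 = (n:ℚ)+s+t := by ring
    rw [h1, descL, hy, descPochhammer_succ_eval, pow_succ, pow_succ, hc]
    linear_combination ((-1:ℚ)^(k-j) * (descPochhammer ℚ (k-j)).eval ((n:ℚ)+s+t) *
      (ascPochhammer ℚ j).eval (s+t) * (s+(j:ℚ))^n * ((n:ℚ)-(k:ℚ)+t)) * hch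
  rw [Finset.sum_congr rfl e3, Finset.sum_add_distrib, ← Finset.mul_sum, ← Finset.mul_sum]
  simp only [Nat.sub_self, pow_zero, Nat.choose_self, Nat.cast_one, descPochhammer_zero,
    Polynomial.eval_one, one_mul, mul_one]
  push_cast
  ring

/-- Closed form for the `(s,t)`-Eulerian numbers (the case `ν = 1`), defined by
`E(n,k) = (k+s)·E(n-1,k) + (n-k+t)·E(n-1,k-1) + δ_{k0}δ_{n0}` with vanishing
for negative indices:
`E(n,k) = (1/k!) ∑_{j=0}^{k} (-1)^{k-j} C(k,j) (n+s+t)^{↓(k-j)} (s+t)^{↑j} (s+j)^n`. -/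
theorem stmt3 (s t : ℚ) (E : ℕ → ℕ → ℚ)
    (h00 : E 0 0 = 1) (h0k : ∀ k, E 0 (k + 1) = 0)
    (hn0 : ∀ n, E (n + 1) 0 = (0 + s) * E n 0)
    (hrec : ∀ n k : ℕ, E (n + 1) (k + 1) =
      (((k : ℚ) + 1) + s) * E n (k + 1) +
      (((n : ℚ) + 1) - ((k : ℚ) + 1) + t) * E n k)
    (n k : ℕ) (hk : k ≤ n) :
    E n k = (1 / (k.factorial : ℚ)) *
      ∑ j ∈ Finset.range (k + 1),
        (-1 : ℚ) ^ (k - j) * (k.choose j : ℚ) *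
          (descPochhammer ℚ (k - j)).eval ((n : ℚ) + s + t) *
          (ascPochhammer ℚ j).eval (s + t) * (s + (j : ℚ)) ^ n := by
  clear hk
  induction n generalizing k with
  | zero =>
    cases k with
    | zero =>
      simp [h00, Finset.sum_range_one]
    | succ k =>
      rw [h0k k]
      have hb : ∑ j ∈ Finset.range (k+2), (-1:ℚ)^(k+1-j) * ((k+1).choose j : ℚ) *
          (descPochhammer ℚ (k+1-j)).eval (((0:ℕ):ℚ) + s + t) *
          (ascPochhammer ℚ j).eval (s+t) * (s+(j:ℚ))^(0:ℕ)
        = ∑ j ∈ Finset.range (k+2), (-1:ℚ)^(k+1-j) * ((k+1).choose j : ℚ) *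
          (descPochhammer ℚ (k+1-j)).eval (s + t) * (ascPochhammer ℚ j).eval (s+t) := by
        apply Finset.sum_congr rfl; intro j _
        norm_num
      rw [show (k+1+1) = k+2 from rfl, hb, baseS (s+t) k, mul_zero]
  | succ n ih =>
    cases k with
    | zero =>
      rw [hn0 n, ih 0]
      simp [Finset.sum_range_one]
      ring
    | succ k =>
      rw [hrec n k, ih (k+1), ih k]
      simp only [Nat.cast_add, Nat.cast_one]
      rw [show (k+1+1) = k+2 from rfl]
      rw [sumrec s t n k]
      have hf : ((k+1).factorial : ℚ) = ((k:ℚ)+1) * (k.factorial : ℚ) := by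
        rw [Nat.factorial_succ]; push_cast; ring
      have hk0 : (k.factorial : ℚ) ≠ 0 := by
        exact_mod_cast k.factorial_ne_zero
      have hk1 : ((k:ℚ)+1) ≠ 0 := by positivity
      rw [hf]
      field_simp
      ring
end

section
/- The (s,-s)-Eulerian numbers satisfy E(n,k) = (-1)^k · C(n,k) · s^n for all n ≥ 0 and 0 ≤ k ≤ n, where E(n,k) is the solution of the recurrence with ν = 1 and t = -s. -/
/-- The `(s,-s)`-Eulerian numbers (the case `ν = 1`, `t = -s`), defined by
`E(n,k) = (k+s)·E(n-1,k) + (n-k-s)·E(n-1,k-1) + δ_{k0}δ_{n0}` with vanishing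
for negative indices, satisfy `E(n,k) = (-1)^k C(n,k) s^n` (as an identity in
the parameter `s`). -/
theorem stmt7 (s : ℚ) (E : ℕ → ℕ → ℚ)
    (h00 : E 0 0 = 1) (h0k : ∀ k, E 0 (k + 1) = 0)
    (hn0 : ∀ n, E (n + 1) 0 = (0 + s) * E n 0)
    (hrec : ∀ n k : ℕ, E (n + 1) (k + 1) =
      (((k : ℚ) + 1) + s) * E n (k + 1) +
      (((n : ℚ) + 1) - ((k : ℚ) + 1) - s) * E n k)
    (n k : ℕ) (hk : k ≤ n) :
    E n k = (-1 : ℚ) ^ k * (n.choose k : ℚ) * s ^ n := by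
  clear hk
  induction n generalizing k with
  | zero =>
    cases k with
    | zero => simpa using h00
    | succ k => simp [h0k]
  | succ n ih =>
    cases k with
    | zero =>
      rw [hn0, ih 0]
      simp only [Nat.choose_zero_right, Nat.cast_one]
      ring
    | succ k =>
      have hch : ((k : ℚ) + 1) * (n.choose (k + 1) : ℚ)
          = ((n : ℚ) - (k : ℚ)) * (n.choose k : ℚ) := by
        rcases le_or_gt (k + 1) n with h | h
        · have h2 := Nat.choose_succ_right_eq n k
          have hkn : k ≤ n := Nat.le_of_succ_le h
          have h3 := congrArg (Nat.cast (R := ℚ)) h2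
          push_cast [Nat.cast_sub hkn] at h3
          linarith
        · rcases Nat.lt_or_ge n (k + 1) with _ | _
          rcases eq_or_lt_of_le (Nat.lt_succ_iff.mp h) with rfl | hlt
          · simp [Nat.choose_succ_self]
          · rw [Nat.choose_eq_zero_of_lt hlt,
              Nat.choose_eq_zero_of_lt (Nat.lt_succ_of_lt hlt)]
            simp
          · omega
      rw [hrec, ih k, ih (k + 1), Nat.choose_succ_succ]
      push_cast
      linear_combination (-1 : ℚ) ^ (k + 1) * s ^ n * hch
end

section
/- For all n ≥ 1, the identity ∑_{j=0}^{n} C(n,j) · j! · j / n^{j+1} = 1 holds. -/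
/-- For all `n ≥ 1`, `∑_{j=0}^{n} C(n,j) · j! · j / n^{j+1} = 1`. -/
theorem stmt8 (n : ℕ) (hn : 1 ≤ n) :
    ∑ j ∈ Finset.range (n + 1),
      (n.choose j : ℚ) * (j.factorial : ℚ) * (j : ℚ) / (n : ℚ) ^ (j + 1) = 1 := by
  have hn0 : (n : ℚ) ≠ 0 := by positivity
  set f : ℕ → ℚ := fun j => (n.factorial : ℚ) / ((n - j).factorial * (n : ℚ) ^ j) with hf
  have hterm : ∀ j < n, (n.choose j : ℚ) * (j.factorial : ℚ) * (j : ℚ) / (n : ℚ) ^ (j + 1)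
      = f j - f (j + 1) := by
    intro j hj
    have hle : j ≤ n := hj.le
    have hchoose : (n.choose j : ℚ) * j.factorial * (n - j).factorial = n.factorial := by
      exact_mod_cast congrArg (Nat.cast : ℕ → ℚ)
        (Nat.choose_mul_factorial_mul_factorial hle)
    have hsub : n - j = (n - (j + 1)) + 1 := by omega
    have hfac : ((n - j).factorial : ℚ) = ((n : ℚ) - j) * (n - (j + 1)).factorial := by
      rw [hsub, Nat.factorial_succ, Nat.cast_mul, Nat.cast_add, Nat.cast_one,
        Nat.cast_sub (by omega : j + 1 ≤ n)]
      push_cast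
      ring
    have hfj0 : ((n - j).factorial : ℚ) ≠ 0 := by positivity
    have hfj1 : ((n - (j + 1)).factorial : ℚ) ≠ 0 := by positivity
    have hnj : ((n : ℚ) - j) ≠ 0 := by
      have : (j : ℚ) < n := by exact_mod_cast hj
      linarith
    simp only [hf]
    rw [div_sub_div _ _ (by positivity) (by positivity),
      div_eq_div_iff (by positivity) (by positivity)]
    rw [← hchoose, hfac]
    ring
  rw [Finset.sum_range_succ]
  have h1 : ∑ j ∈ Finset.range n,
      (n.choose j : ℚ) * (j.factorial : ℚ) * (j : ℚ) / (n : ℚ) ^ (j + 1) = f 0 - f n := by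
    rw [← Finset.sum_range_sub' f]
    exact Finset.sum_congr rfl fun j hj => hterm j (Finset.mem_range.mp hj)
  rw [h1]
  have hlast : (n.choose n : ℚ) * (n.factorial : ℚ) * (n : ℚ) / (n : ℚ) ^ (n + 1) = f n := by
    simp only [hf, Nat.choose_self, Nat.sub_self, Nat.factorial_zero, Nat.cast_one, one_mul,
      pow_succ]
    field_simp
  rw [hlast]
  have hf0 : f 0 = 1 := by
    simp only [hf, Nat.sub_zero, pow_zero, mul_one]
    exact div_self (by positivity)
  rw [hf0]
  exact sub_add_cancel 1 (f n)
end

section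
/- For all n ≥ 0, the identity ∑_{j=0}^{n} C(n,j) · (j+1)! / (n+1)^{j+1} = 1 holds. -/
/-- For all `n ≥ 0`, `∑_{j=0}^{n} C(n,j) · (j+1)! / (n+1)^{j+1} = 1`. -/
theorem stmt9 (n : ℕ) :
    ∑ j ∈ Finset.range (n + 1),
      (n.choose j : ℚ) * ((j + 1).factorial : ℚ) / ((n : ℚ) + 1) ^ (j + 1) = 1 := by
  have hm : ((n : ℚ) + 1) ≠ 0 := by positivity
  have key : ∀ j ∈ Finset.range (n + 1),
      (n.choose j : ℚ) * ((j + 1).factorial : ℚ) / ((n : ℚ) + 1) ^ (j + 1)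
        = (n.descFactorial j : ℚ) / ((n : ℚ) + 1) ^ j
          - (n.descFactorial (j + 1) : ℚ) / ((n : ℚ) + 1) ^ (j + 1) := by
    intro j hj
    have hjn : j ≤ n := Nat.lt_succ_iff.mp (Finset.mem_range.mp hj)
    have h1 : n.descFactorial j = n.choose j * j.factorial :=
      (Nat.descFactorial_eq_factorial_mul_choose n j).trans (Nat.mul_comm _ _)
    have h2 : n.descFactorial (j + 1) = (n - j) * n.descFactorial j :=
      Nat.descFactorial_succ n j
    have h3 : ((n - j : ℕ) : ℚ) = (n : ℚ) - j := by
      push_cast [hjn]; ring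
    have h4 : ((j + 1).factorial : ℚ) = (j + 1) * j.factorial := by
      push_cast [Nat.factorial_succ]; ring
    rw [h2, h1, Nat.factorial_succ]
    push_cast [h3]
    field_simp
    ring
  rw [Finset.sum_congr rfl key, Finset.sum_range_sub']
  simp [Nat.descFactorial_eq_zero_iff_lt.mpr (Nat.lt_succ_self n)]
end

section
/- The second-order Eulerian numbers with standard indexing admit the closed form ⟨⟨n over k⟩⟩ = ∑_{r=0}^{k} (-1)^{k-r} · C(2n+1, k-r) · S(n+r+1, r+1) for n ≥ 0 and 0 ≤ k ≤ n, where S(·,·) denotes Stirling subset numbers (Stirling numbers of the second kind). -/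
/-- Stirling numbers of the second kind (Stirling subset numbers). -/
def stirling2 : ℕ → ℕ → ℕ
  | 0, 0 => 1
  | 0, _ + 1 => 0
  | _ + 1, 0 => 0
  | n + 1, k + 1 => (k + 1) * stirling2 n (k + 1) + stirling2 n k

lemma stirling2_succ_succ (n k : ℕ) :
    stirling2 (n + 1) (k + 1) = (k + 1) * stirling2 n (k + 1) + stirling2 n k := rfl

lemma stirling2_succ_zero (n : ℕ) : stirling2 (n + 1) 0 = 0 := rfl

lemma stirling2_of_lt : ∀ {n k : ℕ}, n < k → stirling2 n k = 0
  | 0, _ + 1, _ => rfl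
  | n + 1, k + 1, h => by
      rw [stirling2_succ_succ, stirling2_of_lt (by omega : n < k + 1),
        stirling2_of_lt (by omega : n < k)]
      simp

lemma stirling2_self : ∀ n : ℕ, stirling2 n n = 1
  | 0 => rfl
  | n + 1 => by
      rw [stirling2_succ_succ, stirling2_of_lt (Nat.lt_succ_self n), stirling2_self n]
      simp

lemma stirling2_one : ∀ n : ℕ, stirling2 (n + 1) 1 = 1
  | 0 => rfl
  | n + 1 => by
      show stirling2 (n + 1 + 1) (0 + 1) = 1
      rw [stirling2_succ_succ]
      show 1 * stirling2 (n + 1) 1 + stirling2 (n + 1) 0 = 1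
      rw [stirling2_one n, stirling2_succ_zero]

/-- The closed-form candidate. -/
def F2 (n k : ℕ) : ℤ := ∑ r ∈ Finset.range (k + 1),
      (-1 : ℤ) ^ (k - r) * ((2 * n + 1).choose (k - r) : ℤ) *
        (stirling2 (n + r + 1) (r + 1) : ℤ)

/-- Auxiliary sum. -/
def T2 (n m : ℕ) : ℤ := ∑ r ∈ Finset.range (m + 1),
      (-1 : ℤ) ^ (m - r) * ((2 * n + 3).choose (m - r) : ℤ) * ((r : ℤ) + 1) *
        (stirling2 (n + r + 1) (r + 1) : ℤ)

lemma choose_ratio (N j : ℕ) :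
    ((j : ℤ) + 1) * (N.choose (j + 1) : ℤ) = ((N : ℤ) - j) * (N.choose j : ℤ) := by
  have h := Nat.add_one_mul_choose_eq N j
  have hps := Nat.choose_succ_succ N j
  rw [hps] at h
  have h' := congrArg (Nat.cast : ℕ → ℤ) h
  push_cast at h'
  linear_combination (-1 : ℤ) * h'

lemma F2_zero (n : ℕ) : F2 n 0 = 1 := by
  simp [F2, stirling2_one]

lemma F2_zero_succ (k : ℕ) : F2 0 (k + 1) = 0 := by
  unfold F2
  simp only [Finset.sum_range_succ]
  have h1 : k + 1 - (k + 1) = 0 := by omega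
  have h2 : k + 1 - k = 1 := by omega
  rw [h1, h2]
  have hz : ∀ r ∈ Finset.range k,
      (-1 : ℤ) ^ (k + 1 - r) * ((2 * 0 + 1).choose (k + 1 - r) : ℤ) *
        (stirling2 (0 + r + 1) (r + 1) : ℤ) = 0 := by
    intro r hr
    have hr' : r < k := Finset.mem_range.mp hr
    have : (2 * 0 + 1).choose (k + 1 - r) = 0 :=
      Nat.choose_eq_zero_of_lt (by omega)
    rw [this]
    push_cast
    ring
  rw [Finset.sum_eq_zero hz]
  have hs1 : stirling2 (0 + k + 1) (k + 1) = 1 := by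
    have : 0 + k + 1 = k + 1 := by omega
    rw [this, stirling2_self]
  have hs2 : stirling2 (0 + (k + 1) + 1) (k + 1 + 1) = 1 := by
    have : 0 + (k + 1) + 1 = k + 1 + 1 := by omega
    rw [this, stirling2_self]
  rw [hs1, hs2]
  norm_num

lemma L1 (n k : ℕ) : F2 (n + 1) (k + 1) = T2 n (k + 1) + F2 (n + 1) k := by
  unfold F2 T2
  have hch : 2 * (n + 1) + 1 = 2 * n + 3 := by ring
  rw [hch]
  have hL : (∑ r ∈ Finset.range (k + 1 + 1),
        (-1 : ℤ) ^ (k + 1 - r) * ((2 * n + 3).choose (k + 1 - r) : ℤ) *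
          (stirling2 (n + 1 + r + 1) (r + 1) : ℤ))
      = (∑ r ∈ Finset.range (k + 1 + 1),
        (-1 : ℤ) ^ (k + 1 - r) * ((2 * n + 3).choose (k + 1 - r) : ℤ) * ((r : ℤ) + 1) *
          (stirling2 (n + r + 1) (r + 1) : ℤ))
      + (∑ r ∈ Finset.range (k + 1 + 1),
        (-1 : ℤ) ^ (k + 1 - r) * ((2 * n + 3).choose (k + 1 - r) : ℤ) *
          (stirling2 (n + r + 1) r : ℤ)) := by
    rw [← Finset.sum_add_distrib]
    refine Finset.sum_congr rfl fun r _ => ?_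
    have hidx : n + 1 + r + 1 = (n + r + 1) + 1 := by omega
    rw [hidx, stirling2_succ_succ]
    push_cast
    ring
  rw [hL]
  congr 1
  rw [Finset.sum_range_succ']
  have hz : (-1 : ℤ) ^ (k + 1 - 0) * ((2 * n + 3).choose (k + 1 - 0) : ℤ) *
      (stirling2 (n + 0 + 1) 0 : ℤ) = 0 := by
    have : stirling2 (n + 0 + 1) 0 = 0 := stirling2_succ_zero _
    rw [this]
    push_cast
    ring
  rw [hz, add_zero]
  refine Finset.sum_congr rfl fun r _ => ?_
  have h1 : k + 1 - (r + 1) = k - r := by omega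
  have h2 : n + (r + 1) + 1 = n + 1 + r + 1 := by omega
  rw [h1, h2]

lemma L2a (n : ℕ) : T2 n 1 = 2 * F2 n 1 + (2 * (n : ℤ) - 1) * F2 n 0 := by
  unfold T2 F2
  simp only [Finset.sum_range_succ, Finset.sum_range_one]
  norm_num [Nat.choose_one_right]
  push_cast
  ring

lemma L2 (n k : ℕ) :
    T2 n (k + 1 + 1) = ((k : ℤ) + 3) * F2 n (k + 1 + 1)
      + (2 * (n : ℤ) - 2 * (k : ℤ) - 3) * F2 n (k + 1)
      - (2 * (n : ℤ) - (k : ℤ)) * F2 n k := by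
  unfold T2 F2
  simp only [Finset.sum_range_succ]
  have e1 : k + 1 + 1 - (k + 1 + 1) = 0 := by omega
  have e2 : k + 1 + 1 - (k + 1) = 1 := by omega
  have e3 : k + 1 + 1 - k = 2 := by omega
  have e4 : k + 1 - (k + 1) = 0 := by omega
  have e5 : k + 1 - k = 1 := by omega
  have e6 : k - k = 0 := by omega
  rw [e1, e2, e3, e4, e5, e6]
  have hmain : (∑ r ∈ Finset.range k,
        (-1 : ℤ) ^ (k + 1 + 1 - r) * ((2 * n + 3).choose (k + 1 + 1 - r) : ℤ) *
          ((r : ℤ) + 1) * (stirling2 (n + r + 1) (r + 1) : ℤ))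
      = ((k : ℤ) + 3) * (∑ r ∈ Finset.range k,
          (-1 : ℤ) ^ (k + 1 + 1 - r) * ((2 * n + 1).choose (k + 1 + 1 - r) : ℤ) *
            (stirling2 (n + r + 1) (r + 1) : ℤ))
        + (2 * (n : ℤ) - 2 * (k : ℤ) - 3) * (∑ r ∈ Finset.range k,
          (-1 : ℤ) ^ (k + 1 - r) * ((2 * n + 1).choose (k + 1 - r) : ℤ) *
            (stirling2 (n + r + 1) (r + 1) : ℤ))
        - (2 * (n : ℤ) - (k : ℤ)) * (∑ r ∈ Finset.range k,
          (-1 : ℤ) ^ (k - r) * ((2 * n + 1).choose (k - r) : ℤ) *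
            (stirling2 (n + r + 1) (r + 1) : ℤ)) := by
    rw [Finset.mul_sum, Finset.mul_sum, Finset.mul_sum, ← Finset.sum_add_distrib,
      ← Finset.sum_sub_distrib]
    refine Finset.sum_congr rfl fun r hr => ?_
    have hrk : r < k := Finset.mem_range.mp hr
    obtain ⟨m, rfl⟩ : ∃ m, k = r + m := ⟨k - r, by omega⟩
    have f1 : r + m + 1 + 1 - r = m + 1 + 1 := by omega
    have f2 : r + m + 1 - r = m + 1 := by omega
    have f3 : r + m - r = m := by omega
    rw [f1, f2, f3]
    have hch : 2 * n + 3 = 2 * n + 1 + 1 + 1 := by omega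
    rw [hch]
    have hp : ((2 * n + 1 + 1 + 1).choose (m + 1 + 1) : ℤ)
        = ((2 * n + 1).choose (m + 1 + 1) : ℤ) + 2 * ((2 * n + 1).choose (m + 1) : ℤ)
          + ((2 * n + 1).choose m : ℤ) := by
      rw [Nat.choose_succ_succ (2 * n + 1 + 1) (m + 1), Nat.choose_succ_succ (2 * n + 1) m,
        Nat.choose_succ_succ (2 * n + 1) (m + 1)]
      push_cast
      ring
    have hr1 := choose_ratio (2 * n + 1) (m + 1)
    have hr2 := choose_ratio (2 * n + 1) m
    push_cast at hr1 hr2 ⊢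
    linear_combination ((-1 : ℤ) ^ m * (stirling2 (n + r + 1) (r + 1) : ℤ) * ((r : ℤ) + 1)) * hp
      - ((-1 : ℤ) ^ m * (stirling2 (n + r + 1) (r + 1) : ℤ)) * hr1
      - ((-1 : ℤ) ^ m * (stirling2 (n + r + 1) (r + 1) : ℤ)) * hr2
  have hD' := Nat.choose_succ_succ (2 * n + 2) 1
  have hD'' := Nat.choose_succ_succ (2 * n + 1) 1
  have hX := choose_ratio (2 * n + 1) 1
  norm_num [Nat.choose_one_right] at hD' hD'' hX
  have hD : ((2 * n + 3).choose 2 : ℤ)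
      = ((2 * n + 1).choose 2 : ℤ) + 2 * (2 * (n : ℤ) + 1) + 1 := by
    rw [hD', hD'']
    push_cast
    ring
  have hX' : 2 * ((2 * n + 1).choose 2 : ℤ) = 2 * (n : ℤ) * (2 * (n : ℤ) + 1) := by
    push_cast at hX
    linear_combination hX
  simp only [Nat.choose_zero_right, Nat.choose_one_right, pow_zero, pow_one]
  push_cast
  linear_combination hmain
    + ((k : ℤ) + 1) * (stirling2 (n + k + 1) (k + 1) : ℤ) * hD
    - (stirling2 (n + k + 1) (k + 1) : ℤ) * hX'

lemma keyF (n : ℕ) : ∀ k : ℕ, F2 (n + 1) (k + 1)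
    = ((k : ℤ) + 2) * F2 n (k + 1) + (2 * (n : ℤ) - (k : ℤ)) * F2 n k := by
  intro k
  induction k with
  | zero =>
      have h1 := L1 n 0
      have h2 := L2a n
      have h3 := F2_zero (n + 1)
      have h4 := F2_zero n
      push_cast
      linear_combination h1 + h2 + h3 - h4
  | succ k ih =>
      have h1 := L1 n (k + 1)
      have h2 := L2 n k
      push_cast
      push_cast at ih
      linear_combination h1 + h2 + ih

/-- Closed form for the second-order Eulerian numbers with standard indexing,
defined by `⟨⟨n,k⟩⟩ = (k+1)⟨⟨n-1,k⟩⟩ + (2n-1-k)⟨⟨n-1,k-1⟩⟩ + δ_{n0}δ_{k0}`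
(vanishing for negative indices):
`⟨⟨n,k⟩⟩ = ∑_{r=0}^{k} (-1)^{k-r} C(2n+1, k-r) S(n+r+1, r+1)`. -/
theorem stmt10 (E : ℕ → ℕ → ℤ)
    (h00 : E 0 0 = 1) (h0k : ∀ k, E 0 (k + 1) = 0)
    (hn0 : ∀ n, E (n + 1) 0 = (0 + 1) * E n 0)
    (hrec : ∀ n k : ℕ, E (n + 1) (k + 1) =
      (((k : ℤ) + 1) + 1) * E n (k + 1) +
      (2 * ((n : ℤ) + 1) - 1 - ((k : ℤ) + 1)) * E n k)
    (n k : ℕ) (hk : k ≤ n) :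
    E n k = ∑ r ∈ Finset.range (k + 1),
      (-1 : ℤ) ^ (k - r) * ((2 * n + 1).choose (k - r) : ℤ) *
        (stirling2 (n + r + 1) (r + 1) : ℤ) := by
  have main : ∀ n k : ℕ, E n k = F2 n k := by
    intro n
    induction n with
    | zero =>
        intro k
        cases k with
        | zero => rw [h00, F2_zero]
        | succ k => rw [h0k, F2_zero_succ]
    | succ n ih =>
        intro k
        cases k with
        | zero => rw [hn0, ih 0, F2_zero, F2_zero]; ring
        | succ k =>
            rw [hrec n k, ih (k + 1), ih k]
            have h := keyF n k
            linear_combination (-1 : ℤ) * h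
  rw [main n k]
  rfl
end

section
/- Suppose a(n,k) satisfies a(n,k) = (αn + βk + γ)·a(n-1,k) + (α'n + β'k + γ')·a(n-1,k-1) + δ_{n0}δ_{k0} with a(n,k)=0 for n<0 or k<0, with β ≠ 0, and b(n,k) satisfies the same type of recurrence with the parameters (α, β, γ; α' + β' − αβ'/β, −β', γ' + β' − γβ'/β). Then for all n, k ≥ 0: a(n,k) = ∑_{j=0}^{k} b(n,j) · C(n-j, n-k) · (β'/β)^{k-j} and b(n,k) = ∑_{j=0}^{k} a(n,j) · C(n-j, n-k) · (−β'/β)^{k-j}. -/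
private lemma vanish (p q : ℕ → ℕ → ℚ) (f : ℕ → ℕ → ℚ) (h0 : ∀ k, f 0 (k + 1) = 0)
    (hrec : ∀ n k, f (n + 1) (k + 1) = p n k * f n (k + 1) + q n k * f n k) :
    ∀ n k, n < k → f n k = 0 := by
  intro n
  induction n with
  | zero =>
    intro k hk
    obtain ⟨k, rfl⟩ : ∃ m, k = m + 1 := ⟨k - 1, by omega⟩
    exact h0 k
  | succ n ih =>
    intro k hk
    obtain ⟨k, rfl⟩ : ∃ m, k = m + 1 := ⟨k - 1, by omega⟩
    rw [hrec, ih (k + 1) (by omega), ih k (by omega)]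
    ring

private lemma point (α β γ α' β' γ' : ℚ) (hβ : β ≠ 0) (n k j : ℕ) (hkn : k ≤ n) (hjk : j ≤ k + 1)
    (x : ℚ) (hx : n < j → x = 0) :
    (α*((n:ℚ)+1)+β*((k:ℚ)+1)+γ) * (x * (if n < k + 1 then 0 else ((n-j).choose (n-(k+1)) : ℚ)) * (-(β'/β))^(k+1-j))
    + ((α'+β'-α*β'/β)*((n:ℚ)+1) + (-β')*((k:ℚ)+1) + (γ'+β'-γ*β'/β)) * (x * ((n-j).choose (n-k) : ℚ) * (-(β'/β))^(k-j))
    = (α*((n:ℚ)+1)+β*(j:ℚ)+γ) * (x * ((n+1-j).choose (n-k) : ℚ) * (-(β'/β))^(k+1-j))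
    + (α'*((n:ℚ)+1)+β'*((j:ℚ)+1)+γ') * (x * ((n-j).choose (n-k) : ℚ) * (-(β'/β))^(k-j)) := by
  rcases Nat.lt_or_ge n j with hnj | hnj
  · rw [hx hnj]; ring
  · rcases eq_or_lt_of_le hkn with heq | hlt
    · -- k = n
      subst heq
      rw [if_pos (by omega), Nat.sub_self, Nat.choose_zero_right, Nat.choose_zero_right,
        show k + 1 - j = (k - j) + 1 by omega, pow_succ]
      push_cast
      field_simp
      ring
    · -- k < n
      rw [if_neg (by omega)]
      rcases eq_or_lt_of_le hjk with hje | hjl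
      · -- j = k + 1
        subst hje
        rw [Nat.sub_self, show n + 1 - (k+1) = n - k by omega, Nat.choose_self,
          Nat.choose_self, Nat.choose_eq_zero_of_lt (show n - (k+1) < n - k by omega)]
        push_cast
        ring
      · -- j ≤ k
        have hjk' : j ≤ k := by omega
        rw [show n - k = (n - (k+1)) + 1 by omega, show n + 1 - j = (n - j) + 1 by omega,
          show k + 1 - j = (k - j) + 1 by omega, pow_succ, Nat.choose_succ_succ]
        have h := Nat.choose_succ_right_eq (n-j) (n-(k+1))
        rw [show n - j - (n - (k+1)) = k + 1 - j by omega] at h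
        have hc : ((n-j).choose (n-(k+1)+1) : ℚ) * ((n:ℚ) - k) = ((n-j).choose (n-(k+1)) : ℚ) * ((k:ℚ)+1-(j:ℚ)) := by
          have h2 := congrArg (Nat.cast : ℕ → ℚ) h
          push_cast [Nat.cast_sub (show j ≤ k + 1 by omega)] at h2
          rw [show ((n-(k+1):ℕ):ℚ) = (n:ℚ) - (k:ℚ) - 1 by rw [Nat.cast_sub (by omega : k+1 ≤ n)]; push_cast; ring] at h2
          linear_combination h2
        generalize (-(β'/β))^(k-j) = E
        push_cast [Nat.succ_eq_add_one]
        have hβ1 : β * β⁻¹ = 1 := mul_inv_cancel₀ hβ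
        linear_combination (x * E * β') * hc + (x * E * β' * ((j:ℚ) * ((n-j).choose (n-(k+1)+1) : ℚ) - ((k:ℚ)+1-j) * ((n-j).choose (n-(k+1)) : ℚ))) * hβ1

private lemma key (α β γ α' β' γ' : ℚ) (hβ : β ≠ 0) (a b : ℕ → ℕ → ℚ)
    (ha00 : a 0 0 = 1) (ha0k : ∀ k, a 0 (k + 1) = 0)
    (han0 : ∀ n, a (n + 1) 0 = (α * ((n : ℚ) + 1) + β * 0 + γ) * a n 0)
    (harec : ∀ n k : ℕ, a (n + 1) (k + 1) =
      (α * ((n : ℚ) + 1) + β * ((k : ℚ) + 1) + γ) * a n (k + 1) +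
      (α' * ((n : ℚ) + 1) + β' * ((k : ℚ) + 1) + γ') * a n k)
    (hb00 : b 0 0 = 1) (hb0k : ∀ k, b 0 (k + 1) = 0)
    (hbn0 : ∀ n, b (n + 1) 0 = (α * ((n : ℚ) + 1) + β * 0 + γ) * b n 0)
    (hbrec : ∀ n k : ℕ, b (n + 1) (k + 1) =
      (α * ((n : ℚ) + 1) + β * ((k : ℚ) + 1) + γ) * b n (k + 1) +
      ((α' + β' - α * β' / β) * ((n : ℚ) + 1) + (-β') * ((k : ℚ) + 1) +
        (γ' + β' - γ * β' / β)) * b n k) :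
    ∀ n k, b n k = ∑ j ∈ Finset.range (k + 1),
        a n j * (if n < k then 0 else ((n - j).choose (n - k) : ℚ)) * (-(β' / β)) ^ (k - j) := by
  have hav : ∀ n k, n < k → a n k = 0 := vanish _ _ a ha0k harec
  have hbv : ∀ n k, n < k → b n k = 0 := vanish _ _ b hb0k hbrec
  intro n
  induction n with
  | zero =>
    intro k
    cases k with
    | zero => simp [Finset.sum_range_one, ha00, hb00]
    | succ k =>
      rw [hb0k]
      symm
      apply Finset.sum_eq_zero
      intro j hj
      rw [if_pos (Nat.succ_pos k)]
      ring
  | succ n ih =>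
    intro k
    cases k with
    | zero =>
      have h0 : b n 0 = a n 0 := by simpa using ih 0
      rw [hbn0, h0, ← han0 n]
      simp
    | succ k =>
      by_cases hnk' : n < k
      · rw [hbv (n + 1) (k + 1) (by omega)]
        symm
        apply Finset.sum_eq_zero
        intro j hj
        rw [if_pos (by omega)]
        ring
      · have hnk : ¬ n < k := hnk'
        have hkn : k ≤ n := by omega
        have hzero : a n (k + 1) * (((n - (k + 1)).choose (n - k)) : ℚ) = 0 := by
          rcases eq_or_lt_of_le hkn with heq | hlt
          · rw [hav n (k + 1) (by omega)]; ring
          · rw [Nat.choose_eq_zero_of_lt (by omega : n - (k + 1) < n - k)]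
            push_cast; ring
        -- abbreviations as explicit sums
        have hS0 : (∑ j ∈ Finset.range (k + 1 + 1),
              a n j * (if n < k then 0 else ((n - j).choose (n - k) : ℚ)) * (-(β' / β)) ^ (k - j))
            = (∑ j ∈ Finset.range (k + 1),
              a n j * (if n < k then 0 else ((n - j).choose (n - k) : ℚ)) * (-(β' / β)) ^ (k - j)) := by
          rw [Finset.sum_range_succ, if_neg hnk]
          have : a n (k + 1) * (((n - (k + 1)).choose (n - k)) : ℚ) * (-(β' / β)) ^ (k - (k + 1)) = 0 := by
            linear_combination ((-(β' / β)) ^ (k - (k + 1))) * hzero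
          rw [this, add_zero]
        have hV : (∑ j ∈ Finset.range (k + 1 + 1),
              (α' * ((n:ℚ) + 1) + β' * ((j:ℚ) + 1) + γ') * (a n j * ((n - j).choose (n - k) : ℚ) * (-(β' / β)) ^ (k - j)))
            = (∑ j ∈ Finset.range (k + 1),
              (α' * ((n:ℚ) + 1) + β' * ((j:ℚ) + 1) + γ') * (a n j * ((n - j).choose (n - k) : ℚ) * (-(β' / β)) ^ (k - j))) := by
          rw [Finset.sum_range_succ]
          have : (α' * ((n:ℚ) + 1) + β' * (((k+1:ℕ):ℚ) + 1) + γ') * (a n (k+1) * ((n - (k+1)).choose (n - k) : ℚ) * (-(β' / β)) ^ (k - (k+1))) = 0 := by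
            linear_combination ((α' * ((n:ℚ) + 1) + β' * (((k+1:ℕ):ℚ) + 1) + γ') * (-(β' / β)) ^ (k - (k+1))) * hzero
          rw [this, add_zero]
        have hsplit : (∑ j ∈ Finset.range (k + 1 + 1),
              a (n+1) j * (if n + 1 < k + 1 then 0 else ((n + 1 - j).choose (n + 1 - (k + 1)) : ℚ)) * (-(β' / β)) ^ (k + 1 - j))
            = (∑ j ∈ Finset.range (k + 1 + 1),
              (α * ((n:ℚ) + 1) + β * (j:ℚ) + γ) * (a n j * ((n + 1 - j).choose (n - k) : ℚ) * (-(β' / β)) ^ (k + 1 - j)))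
            + (∑ j ∈ Finset.range (k + 1),
              (α' * ((n:ℚ) + 1) + β' * ((j:ℚ) + 1) + γ') * (a n j * ((n - j).choose (n - k) : ℚ) * (-(β' / β)) ^ (k - j))) := by
          have e1 : (∑ j ∈ Finset.range (k + 1 + 1),
                a (n+1) j * (if n + 1 < k + 1 then 0 else ((n + 1 - j).choose (n + 1 - (k + 1)) : ℚ)) * (-(β' / β)) ^ (k + 1 - j))
              = (∑ j ∈ Finset.range (k + 1),
                a (n+1) (j+1) * (if n + 1 < k + 1 then 0 else ((n + 1 - (j+1)).choose (n + 1 - (k + 1)) : ℚ)) * (-(β' / β)) ^ (k + 1 - (j+1)))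
              + a (n+1) 0 * (if n + 1 < k + 1 then 0 else ((n + 1 - 0).choose (n + 1 - (k + 1)) : ℚ)) * (-(β' / β)) ^ (k + 1 - 0) :=
            Finset.sum_range_succ' _ _
          have e2 : (∑ j ∈ Finset.range (k + 1 + 1),
                (α * ((n:ℚ) + 1) + β * (j:ℚ) + γ) * (a n j * ((n + 1 - j).choose (n - k) : ℚ) * (-(β' / β)) ^ (k + 1 - j)))
              = (∑ j ∈ Finset.range (k + 1),
                (α * ((n:ℚ) + 1) + β * ((j+1:ℕ):ℚ) + γ) * (a n (j+1) * ((n + 1 - (j+1)).choose (n - k) : ℚ) * (-(β' / β)) ^ (k + 1 - (j+1))))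
              + (α * ((n:ℚ) + 1) + β * ((0:ℕ):ℚ) + γ) * (a n 0 * ((n + 1 - 0).choose (n - k) : ℚ) * (-(β' / β)) ^ (k + 1 - 0)) :=
            Finset.sum_range_succ' _ _
          rw [e1, e2]
          have e3 : ∀ j ∈ Finset.range (k + 1),
              a (n+1) (j+1) * (if n + 1 < k + 1 then 0 else ((n + 1 - (j+1)).choose (n + 1 - (k + 1)) : ℚ)) * (-(β' / β)) ^ (k + 1 - (j+1))
              = (α * ((n:ℚ) + 1) + β * ((j+1:ℕ):ℚ) + γ) * (a n (j+1) * ((n + 1 - (j+1)).choose (n - k) : ℚ) * (-(β' / β)) ^ (k + 1 - (j+1)))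
              + (α' * ((n:ℚ) + 1) + β' * ((j:ℚ) + 1) + γ') * (a n j * ((n - j).choose (n - k) : ℚ) * (-(β' / β)) ^ (k - j)) := by
            intro j hj
            have h1 : n + 1 - (j + 1) = n - j := by omega
            have h2 : n + 1 - (k + 1) = n - k := by omega
            have h3 : k + 1 - (j + 1) = k - j := by omega
            rw [h1, h2, h3, if_neg (by omega : ¬ n + 1 < k + 1), harec]
            push_cast
            ring
          rw [Finset.sum_congr rfl e3, Finset.sum_add_distrib,
            if_neg (by omega : ¬ n + 1 < k + 1), han0]
          push_cast
          ring
        rw [hbrec, ih (k + 1), ih k, hsplit, ← hS0, Finset.mul_sum, Finset.mul_sum,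
          ← Finset.sum_add_distrib, ← hV, ← Finset.sum_add_distrib]
        apply Finset.sum_congr rfl
        intro j hj
        have hj' : j ≤ k + 1 := by
          have := Finset.mem_range.mp hj; omega
        rw [if_neg hnk]
        have hp := point α β γ α' β' γ' hβ n k j hkn hj' (a n j) (fun h => hav n j h)
        linear_combination hp

/-- Inverse-pair relation between solutions of the two-parameter linear
recurrence `a(n,k) = (αn+βk+γ)a(n-1,k) + (α'n+β'k+γ')a(n-1,k-1) + δ_{n0}δ_{k0}`
(vanishing for negative indices) with parameter sets
`(α,β,γ;α',β',γ')` and `(α,β,γ; α'+β'-αβ'/β, -β', γ'+β'-γβ'/β)`.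
Here the binomial `C(n-j, n-k)` is understood to vanish when `n - k < 0`. -/
theorem stmt12 (α β γ α' β' γ' : ℚ) (hβ : β ≠ 0) (a b : ℕ → ℕ → ℚ)
    (ha00 : a 0 0 = 1) (ha0k : ∀ k, a 0 (k + 1) = 0)
    (han0 : ∀ n, a (n + 1) 0 = (α * ((n : ℚ) + 1) + β * 0 + γ) * a n 0)
    (harec : ∀ n k : ℕ, a (n + 1) (k + 1) =
      (α * ((n : ℚ) + 1) + β * ((k : ℚ) + 1) + γ) * a n (k + 1) +
      (α' * ((n : ℚ) + 1) + β' * ((k : ℚ) + 1) + γ') * a n k)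
    (hb00 : b 0 0 = 1) (hb0k : ∀ k, b 0 (k + 1) = 0)
    (hbn0 : ∀ n, b (n + 1) 0 = (α * ((n : ℚ) + 1) + β * 0 + γ) * b n 0)
    (hbrec : ∀ n k : ℕ, b (n + 1) (k + 1) =
      (α * ((n : ℚ) + 1) + β * ((k : ℚ) + 1) + γ) * b n (k + 1) +
      ((α' + β' - α * β' / β) * ((n : ℚ) + 1) + (-β') * ((k : ℚ) + 1) +
        (γ' + β' - γ * β' / β)) * b n k)
    (n k : ℕ) :
    a n k = (∑ j ∈ Finset.range (k + 1),
        b n j * (if n < k then 0 else ((n - j).choose (n - k) : ℚ)) * (β' / β) ^ (k - j))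
    ∧ b n k = (∑ j ∈ Finset.range (k + 1),
        a n j * (if n < k then 0 else ((n - j).choose (n - k) : ℚ)) * (-(β' / β)) ^ (k - j)) := by
  refine ⟨?_, key α β γ α' β' γ' hβ a b ha00 ha0k han0 harec hb00 hb0k hbn0 hbrec n k⟩
  have h1 := key α β γ (α' + β' - α * β' / β) (-β') (γ' + β' - γ * β' / β) hβ b a
    hb00 hb0k hbn0 hbrec ha00 ha0k han0 (fun n k => by linear_combination harec n k) n k
  rw [show (-(-β' / β)) = β' / β by ring] at h1
  exact h1
end

section
/- The Ward numbers W(n,k), equal to the associated Stirling subset numbers {n+k over k}_{≥2} (counting partitions of an (n+k)-set into k blocks each of size at least 2), satisfy {n+k over k}_{≥2} = ∑_{j=0}^{k} B(n,j)·C(n-j, n-k), where B(n,k) are the second-order Eulerian numbers with traditional indexing. -/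
/-- The associated Stirling subset number `{m over k}_{≥2}`: the number of
partitions of an `m`-element set into `k` blocks, each of size at least 2. -/
noncomputable def assocStirling (m k : ℕ) : ℕ :=
  Nat.card {P : Finpartition (Finset.univ : Finset (Fin m)) //
    P.parts.card = k ∧ ∀ p ∈ P.parts, 2 ≤ p.card}

open Finset
variable {α : Type*} [DecidableEq α] {s : Finset α}

noncomputable def N (s : Finset α) (k : ℕ) : ℕ :=
  Nat.card {P : Finpartition s // P.parts.card = k ∧ ∀ p ∈ P.parts, 2 ≤ p.card}

lemma assocStirling_eq_N (m k : ℕ) : assocStirling m k = N (Finset.univ : Finset (Fin m)) k := rfl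

lemma N_eq_filter (s : Finset α) (k : ℕ) :
    N s k = ((Finset.univ : Finset (Finpartition s)).filter
      (fun P => P.parts.card = k ∧ ∀ p ∈ P.parts, 2 ≤ p.card)).card := by
  classical
  rw [N, Nat.card_eq_fintype_card, Fintype.card_subtype]

-- avoid a full part
lemma avoid_parts_of_mem (P : Finpartition s) {q : Finset α} (hq : q ∈ P.parts) :
    (P.avoid q).parts = P.parts.erase q := by
  ext c
  rw [Finpartition.mem_avoid, mem_erase]
  constructor
  · rintro ⟨d, hd, hdq, rfl⟩
    have hne : d ≠ q := by rintro rfl; exact hdq le_rfl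
    have : d \ q = d := sdiff_eq_self_of_disjoint (P.disjoint hd hq hne)
    rw [this]
    exact ⟨hne, hd⟩
  · rintro ⟨hne, hc⟩
    refine ⟨c, hc, ?_, sdiff_eq_self_of_disjoint (P.disjoint hc hq hne)⟩
    intro hle
    obtain ⟨x, hx⟩ := P.nonempty_of_mem_parts hc
    exact (disjoint_left.1 (P.disjoint hc hq hne) hx (hle hx))

variable {β : Type*} [DecidableEq β]

/-- Push a finpartition forward along an embedding. -/
def mapEmb (f : α ↪ β) (P : Finpartition s) : Finpartition (s.map f) where
  parts := P.parts.map ⟨Finset.map f, Finset.map_injective f⟩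
  supIndep := by
    rw [Finset.supIndep_iff_pairwiseDisjoint]
    rintro p hp q hq hpq
    rw [Finset.coe_map] at hp hq
    simp only [Set.mem_image, Function.Embedding.coeFn_mk] at hp hq
    obtain ⟨p', hp', rfl⟩ := hp
    obtain ⟨q', hq', rfl⟩ := hq
    have : Disjoint p' q' := P.disjoint hp' hq' (fun h => hpq (by rw [h]))
    show (Function.onFun Disjoint id) (Finset.map f p') (Finset.map f q')
    simp only [Function.onFun, id_eq]
    exact (Finset.disjoint_map f).2 this
  sup_parts := by
    ext x
    simp only [Finset.mem_sup, Finset.mem_map, Function.Embedding.coeFn_mk, id]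
    constructor
    · rintro ⟨p, ⟨p', hp', rfl⟩, hx⟩
      rw [Finset.mem_map] at hx
      obtain ⟨y, hy, rfl⟩ := hx
      have : y ∈ s := by
        rw [← P.sup_parts]; exact Finset.mem_sup.2 ⟨p', hp', hy⟩
      exact ⟨y, this, rfl⟩
    · intro hx
      obtain ⟨y, hy, rfl⟩ := hx
      rw [← P.sup_parts] at hy
      obtain ⟨p, hp, hyp⟩ := Finset.mem_sup.1 hy
      exact ⟨p.map f, ⟨p, hp, rfl⟩, Finset.mem_map_of_mem f hyp⟩
  bot_notMem := by
    simp only [Finset.bot_eq_empty, Finset.mem_map, Function.Embedding.coeFn_mk]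
    rintro ⟨p, hp, hpe⟩
    exact P.bot_notMem (by rwa [Finset.map_eq_empty.1 hpe] at hp)

lemma mapEmb_parts (f : α ↪ β) (P : Finpartition s) :
    (mapEmb f P).parts = P.parts.map ⟨Finset.map f, Finset.map_injective f⟩ := rfl

lemma N_map (f : α ↪ β) (s : Finset α) (k : ℕ) : N (s.map f) k = N s k := by
  classical
  rw [N_eq_filter, N_eq_filter]
  refine (Finset.card_bij (fun P _ => mapEmb f P) ?_ ?_ ?_).symm
  · intro P hP
    simp only [Finset.mem_filter, Finset.mem_univ, true_and] at hP ⊢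
    obtain ⟨hc, hs⟩ := hP
    constructor
    · rw [mapEmb_parts, Finset.card_map, hc]
    · intro p hp
      rw [mapEmb_parts, Finset.mem_map] at hp
      obtain ⟨q, hq, rfl⟩ := hp
      simpa using hs q hq
  · intro P _ P' _ h
    have := congrArg Finpartition.parts h
    rw [mapEmb_parts, mapEmb_parts] at this
    exact Finpartition.ext (Finset.map_injective _ this)
  · intro Q hQ
    simp only [Finset.mem_filter, Finset.mem_univ, true_and] at hQ
    obtain ⟨hc, hs⟩ := hQ
    -- pull back
    have hinj : Set.InjOn f (Set.univ : Set α) := fun a _ b _ h => f.injective h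
    set pre : Finset β → Finset α := fun q => q.preimage f (hinj.mono (Set.subset_univ _)) with hpre
    have hmp : ∀ q ∈ Q.parts, (pre q).map f = q := by
      intro q hq
      rw [Finset.map_eq_image, hpre]
      rw [Finset.image_preimage]
      refine Finset.filter_true_of_mem ?_
      intro x hx
      have := Q.le hq hx
      rw [Finset.mem_map] at this
      obtain ⟨a, _, rfl⟩ := this
      exact Set.mem_range_self a
    have hcard : ∀ q ∈ Q.parts, (pre q).card = q.card := by
      intro q hq
      conv_rhs => rw [← hmp q hq]
      rw [Finset.card_map]
    have hpreinj : Set.InjOn pre Q.parts := by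
      intro q hq q' hq' h
      rw [← hmp q hq, ← hmp q' hq', h]
    have hmem : ∀ {x : α} {q : Finset β}, x ∈ pre q ↔ f x ∈ q := by
      intro x q; rw [hpre]; exact Finset.mem_preimage
    refine ⟨⟨Q.parts.image pre, ?_, ?_, ?_⟩, ?_, ?_⟩
    · rw [Finset.supIndep_iff_pairwiseDisjoint]
      rintro p hp p' hp' hne
      rw [Finset.coe_image] at hp hp'
      obtain ⟨q, hq, rfl⟩ := hp
      obtain ⟨q', hq', rfl⟩ := hp'
      have hqq : q ≠ q' := fun h => hne (by rw [h])
      show Disjoint (id (pre q)) (id (pre q'))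
      simp only [id_eq]
      rw [Finset.disjoint_left]
      intro x hx hx'
      exact Finset.disjoint_left.1 (Q.disjoint hq hq' hqq) (hmem.1 hx) (hmem.1 hx')
    · ext x
      rw [Finset.mem_sup]
      constructor
      · rintro ⟨p, hp, hx⟩
        rw [Finset.mem_image] at hp
        obtain ⟨q, hq, rfl⟩ := hp
        have : f x ∈ s.map f := Q.le hq (hmem.1 hx)
        rw [Finset.mem_map] at this
        obtain ⟨a, ha, hfa⟩ := this
        rwa [← f.injective hfa]
      · intro hx
        have : f x ∈ s.map f := Finset.mem_map_of_mem f hx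
        rw [← Q.sup_parts, Finset.mem_sup] at this
        obtain ⟨q, hq, hfx⟩ := this
        exact ⟨pre q, Finset.mem_image_of_mem pre hq, hmem.2 hfx⟩
    · rw [Finset.bot_eq_empty, Finset.mem_image]
      rintro ⟨q, hq, hqe⟩
      have := hmp q hq
      rw [hqe] at this
      simp only [Finset.map_empty] at this
      exact Q.nonempty_of_mem_parts hq |>.ne_empty this.symm
    · simp only [Finset.mem_filter, Finset.mem_univ, true_and]
      constructor
      · rw [Finset.card_image_of_injOn hpreinj, hc]
      · intro p hp
        rw [Finset.mem_image] at hp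
        obtain ⟨q, hq, rfl⟩ := hp
        rw [hcard q hq]
        exact hs q hq
    · apply Finpartition.ext
      rw [mapEmb_parts]
      ext q
      simp only [Finset.mem_map, Finset.mem_image, Function.Embedding.coeFn_mk]
      constructor
      · rintro ⟨p, ⟨q', hq', rfl⟩, rfl⟩
        rwa [hmp q' hq']
      · intro hq
        exact ⟨pre q, ⟨q, hq, rfl⟩, hmp q hq⟩

lemma N_eq_assocStirlingRaw (s : Finset α) (k : ℕ) :
    N s k = N (Finset.univ : Finset (Fin s.card)) k := by
  classical
  have e : Fin s.card ≃ {x // x ∈ s} := s.equivFin.symm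
  have g : Fin s.card ↪ α := e.toEmbedding.trans (Function.Embedding.subtype _)
  have hg : (Finset.univ : Finset (Fin s.card)).map
      (e.toEmbedding.trans (Function.Embedding.subtype _)) = s := by
    rw [← Finset.map_map, Finset.map_univ_equiv, Finset.univ_eq_attach, Finset.attach_map_val]
  rw [← N_map (e.toEmbedding.trans (Function.Embedding.subtype _)) Finset.univ k, hg]

lemma N_empty : N (∅ : Finset α) 0 = 1 := by
  classical
  have hP : ∀ P : Finpartition (∅ : Finset α), P.parts = ∅ := fun P =>
    Finpartition.parts_eq_empty_iff.2 Finset.bot_eq_empty.symm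
  rw [N_eq_filter, Finset.card_eq_one]
  refine ⟨(Finpartition.empty (Finset α)).copy Finset.bot_eq_empty, ?_⟩
  rw [Finset.eq_singleton_iff_unique_mem]
  constructor
  · simp only [Finset.mem_filter, Finset.mem_univ, true_and]
    constructor
    · rw [hP]; rfl
    · intro p hp; rw [hP] at hp; exact absurd hp (Finset.notMem_empty p)
  · intro P _
    exact Finpartition.ext (by rw [hP, hP])

lemma N_pos_zero (hs : s.Nonempty) : N s 0 = 0 := by
  classical
  rw [N_eq_filter, Finset.card_eq_zero, Finset.filter_eq_empty_iff]
  rintro P -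
  rintro ⟨hc, -⟩
  rw [Finset.card_eq_zero] at hc
  have := Finpartition.parts_eq_empty_iff.1 hc
  rw [Finset.bot_eq_empty] at this
  exact hs.ne_empty this

lemma N_small (k : ℕ) (h : s.card < 2 * k) : N s k = 0 := by
  classical
  rw [N_eq_filter, Finset.card_eq_zero, Finset.filter_eq_empty_iff]
  rintro P -
  rintro ⟨hc, hsz⟩
  have h1 : 2 * k ≤ ∑ p ∈ P.parts, p.card := by
    calc 2 * k = ∑ _p ∈ P.parts, 2 := by rw [Finset.sum_const, hc, smul_eq_mul, mul_comm]
    _ ≤ ∑ p ∈ P.parts, p.card := Finset.sum_le_sum hsz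
  rw [P.sum_card_parts] at h1
  omega

lemma not_mem_part_of_ne {P : Finpartition s} {a : α} {p : Finset α} (hp : p ∈ P.parts)
    (hne : p ≠ P.part a) : a ∉ p := by
  intro hap
  exact hne (P.part_eq_of_mem hp hap).symm

lemma avoid_singleton_parts {P : Finpartition s} {a : α} (ha : a ∈ s)
    (h2 : 2 ≤ (P.part a).card) :
    (P.avoid {a}).parts = insert ((P.part a).erase a) (P.parts.erase (P.part a)) := by
  ext c
  rw [Finpartition.mem_avoid, Finset.mem_insert, Finset.mem_erase]
  constructor
  · rintro ⟨d, hd, hds, rfl⟩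
    by_cases hdt : d = P.part a
    · left; rw [hdt, Finset.sdiff_singleton_eq_erase]
    · have had : a ∉ d := not_mem_part_of_ne hd hdt
      right
      rw [Finset.sdiff_singleton_eq_erase, Finset.erase_eq_of_notMem had]
      exact ⟨hdt, hd⟩
  · rintro (rfl | ⟨hne, hc⟩)
    · refine ⟨P.part a, (P.part_mem.2 ha), ?_, by rw [Finset.sdiff_singleton_eq_erase]⟩
      intro hle
      have := Finset.card_le_card hle
      simp only [Finset.card_singleton] at this
      omega
    · have hac : a ∉ c := not_mem_part_of_ne hc hne
      refine ⟨c, hc, ?_, ?_⟩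
      · intro hle
        obtain ⟨x, hx⟩ := P.nonempty_of_mem_parts hc
        have := hle hx
        rw [Finset.mem_singleton] at this
        exact hac (this ▸ hx)
      · rw [Finset.sdiff_singleton_eq_erase, Finset.erase_eq_of_notMem hac]

/-- Delete the element `a` from a finpartition of `s`. -/
def delp (a : α) (P : Finpartition s) : Finpartition (s.erase a) :=
  (P.avoid {a}).copy (by rw [Finset.sdiff_singleton_eq_erase])

lemma delp_parts {P : Finpartition s} {a : α} (ha : a ∈ s) (h2 : 2 ≤ (P.part a).card) :
    (delp a P).parts = insert ((P.part a).erase a) (P.parts.erase (P.part a)) :=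
  avoid_singleton_parts ha h2

/-- The partner function: an element sharing the block of `a`, other than `a`. -/
noncomputable def partner (a : α) (P : Finpartition s) : α :=
  if h : ((P.part a).erase a).Nonempty then h.choose else a

lemma partner_spec {P : Finpartition s} {a y : α} (h : (P.part a).erase a = {y}) :
    partner a P = y := by
  have hne : ((P.part a).erase a).Nonempty := by rw [h]; exact Finset.singleton_nonempty y
  rw [partner, dif_pos hne]
  have h2 := hne.choose_spec
  rw [Finset.ext_iff] at h
  exact Finset.mem_singleton.1 ((h _).1 h2)

lemma partner_mem {P : Finpartition s} {a : α} (h : ((P.part a).erase a).Nonempty) :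
    partner a P ∈ (P.part a).erase a := by
  rw [partner, dif_pos h]; exact h.choose_spec

/-- Insert `a` into the block `q` of a finpartition of `s.erase a`. -/
def insp (a : α) (ha : a ∈ s) (Q : Finpartition (s.erase a)) {q : Finset α}
    (hq : q ∈ Q.parts) : Finpartition s :=
  (Q.avoid q).extend (b := insert a q)
    (by simp [Finset.bot_eq_empty, Finset.insert_ne_empty])
    (by
      rw [Finset.disjoint_right]
      intro x hx hx'
      rw [Finset.mem_sdiff] at hx'
      rw [Finset.mem_insert] at hx
      rcases hx with rfl | hx
      · exact (Finset.notMem_erase x s) hx'.1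
      · exact hx'.2 hx)
    (by
      have hqs : q ⊆ s.erase a := Q.le hq
      ext x
      simp only [sup_eq_union, Finset.mem_union, Finset.mem_sdiff, Finset.mem_insert,
        Finset.mem_erase]
      constructor
      · rintro (⟨⟨-, hx⟩, -⟩ | (rfl | hx))
        · exact hx
        · exact ha
        · exact (Finset.mem_erase.1 (hqs hx)).2
      · intro hx
        by_cases hxa : x = a
        · exact Or.inr (Or.inl hxa)
        · by_cases hxq : x ∈ q
          · exact Or.inr (Or.inr hxq)
          · exact Or.inl ⟨⟨hxa, hx⟩, hxq⟩)

lemma insp_parts {a : α} (ha : a ∈ s) (Q : Finpartition (s.erase a)) {q : Finset α}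
    (hq : q ∈ Q.parts) :
    (insp a ha Q hq).parts = insert (insert a q) (Q.parts.erase q) := by
  rw [insp, Finpartition.extend_parts, avoid_parts_of_mem Q hq]

lemma not_mem_erase_ground {a : α} (Q : Finpartition (s.erase a)) {q : Finset α}
    (hq : q ∈ Q.parts) : a ∉ q := fun h => (Finset.notMem_erase a s) (Q.le hq h)

lemma insert_not_mem_erase {a : α} (Q : Finpartition (s.erase a)) {q : Finset α} :
    insert a q ∉ Q.parts.erase q := by
  intro h
  have h1 := Finset.mem_of_mem_erase h
  exact (Finset.notMem_erase a s) (Q.le h1 (Finset.mem_insert_self a q))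

lemma insp_part_a {a : α} (ha : a ∈ s) (Q : Finpartition (s.erase a)) {q : Finset α}
    (hq : q ∈ Q.parts) : (insp a ha Q hq).part a = insert a q := by
  refine ((insp a ha Q hq).part_eq_of_mem ?_ (Finset.mem_insert_self a q))
  rw [insp_parts]
  exact Finset.mem_insert_self _ _

lemma erase_part_not_mem {P : Finpartition s} {a : α} (ha : a ∈ s)
    (h2 : 2 ≤ (P.part a).card) :
    (P.part a).erase a ∉ P.parts.erase (P.part a) := by
  intro hmem
  have hmem' := Finset.mem_of_mem_erase hmem
  have hne := Finset.ne_of_mem_erase hmem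
  obtain ⟨x, hx⟩ : ((P.part a).erase a).Nonempty := by
    rw [← Finset.card_pos, Finset.card_erase_of_mem (P.mem_part ha)]; omega
  exact Finset.disjoint_left.1 (P.disjoint hmem' ((P.part_mem.2 ha)) hne) hx
    (Finset.mem_of_mem_erase hx)

lemma N_rec {a : α} (ha : a ∈ s) (k : ℕ) :
    N s (k + 1) = (k + 1) * N (s.erase a) (k + 1)
      + ∑ y ∈ s.erase a, N ((s.erase a).erase y) k := by
  classical
  set F : Finset (Finpartition s) := Finset.univ.filter
    (fun P => P.parts.card = k + 1 ∧ ∀ p ∈ P.parts, 2 ≤ p.card) with hF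
  set A : Finset (Finpartition (s.erase a)) := Finset.univ.filter
    (fun Q => Q.parts.card = k + 1 ∧ ∀ p ∈ Q.parts, 2 ≤ p.card) with hA
  set F3 : Finset (Finpartition s) := F.filter (fun P => 3 ≤ (P.part a).card) with hF3
  set F2 : Finset (Finpartition s) := F.filter (fun P => ¬ 3 ≤ (P.part a).card) with hF2
  have hsplit : F3.card + F2.card = F.card := Finset.card_filter_add_card_filter_not _
  have hpart2 : ∀ P ∈ F, 2 ≤ (P.part a).card := by
    intro P hP
    rw [hF, Finset.mem_filter] at hP
    exact hP.2.2 _ ((P.part_mem.2 ha))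
  have hdelA : ∀ P ∈ F3, delp a P ∈ A := by
    intro P hP
    rw [hF3, Finset.mem_filter, hF, Finset.mem_filter] at hP
    obtain ⟨⟨-, hc, hsz⟩, h3⟩ := hP
    have h2 : 2 ≤ (P.part a).card := hsz _ ((P.part_mem.2 ha))
    have hni : (P.part a).erase a ∉ P.parts.erase (P.part a) := by
      intro hmem
      have hmem' := Finset.mem_of_mem_erase hmem
      have hne := Finset.ne_of_mem_erase hmem
      obtain ⟨x, hx⟩ : ((P.part a).erase a).Nonempty := by
        rw [← Finset.card_pos, Finset.card_erase_of_mem (P.mem_part ha)]; omega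
      exact Finset.disjoint_left.1 (P.disjoint hmem' ((P.part_mem.2 ha)) hne) hx
        (Finset.mem_of_mem_erase hx)
    rw [hA, Finset.mem_filter]
    refine ⟨Finset.mem_univ _, ?_, ?_⟩
    · rw [delp_parts ha h2, Finset.card_insert_of_notMem hni,
        Finset.card_erase_of_mem ((P.part_mem.2 ha)), hc]
      omega
    · intro p hp
      rw [delp_parts ha h2, Finset.mem_insert] at hp
      rcases hp with rfl | hp
      · rw [Finset.card_erase_of_mem (P.mem_part ha)]; omega
      · exact hsz _ (Finset.mem_of_mem_erase hp)
  have hfiber3 : ∀ Q ∈ A, (F3.filter (fun P => delp a P = Q)).card = k + 1 := by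
    intro Q hQ
    rw [hA, Finset.mem_filter] at hQ
    obtain ⟨-, hQc, hQsz⟩ := hQ
    have key : (F3.filter (fun P => delp a P = Q)).card = Q.parts.card := by
      refine Finset.card_bij' (fun P _ => (P.part a).erase a)
        (fun q hq => insp a ha Q hq) ?_ ?_ ?_ ?_
      · -- forward maps into Q.parts
        intro P hP
        rw [Finset.mem_filter] at hP
        obtain ⟨hP3, hdel⟩ := hP
        have h2 : 2 ≤ (P.part a).card :=
          hpart2 P (Finset.mem_of_mem_filter _ (hF3 ▸ hP3))
        show (P.part a).erase a ∈ Q.parts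
        rw [← hdel, delp_parts ha h2]
        exact Finset.mem_insert_self _ _
      · -- backward maps into fiber
        intro q hq
        have haq : a ∉ q := not_mem_erase_ground Q hq
        have hq2 : 2 ≤ q.card := hQsz _ hq
        have hparts := insp_parts ha Q hq
        have hpa := insp_part_a ha Q hq
        have hins_card : (insert a q).card = q.card + 1 := Finset.card_insert_of_notMem haq
        rw [Finset.mem_filter]
        constructor
        · rw [hF3, Finset.mem_filter, hF, Finset.mem_filter]
          refine ⟨⟨Finset.mem_univ _, ?_, ?_⟩, ?_⟩
          · rw [hparts, Finset.card_insert_of_notMem (insert_not_mem_erase Q),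
              Finset.card_erase_of_mem hq, hQc]
            omega
          · intro p hp
            rw [hparts, Finset.mem_insert] at hp
            rcases hp with rfl | hp
            · omega
            · exact hQsz _ (Finset.mem_of_mem_erase hp)
          · rw [hpa]; omega
        · -- delp (insp) = Q
          have h2' : 2 ≤ ((insp a ha Q hq).part a).card := by rw [hpa]; omega
          apply Finpartition.ext
          rw [delp_parts ha h2', hpa, hparts, Finset.erase_insert haq,
            Finset.erase_insert (insert_not_mem_erase Q), Finset.insert_erase hq]
      · -- left inverse
        intro P hP
        rw [Finset.mem_filter] at hP
        obtain ⟨hP3, hdel⟩ := hP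
        have h2 : 2 ≤ (P.part a).card :=
          hpart2 P (Finset.mem_of_mem_filter _ (hF3 ▸ hP3))
        apply Finpartition.ext
        rw [insp_parts, Finset.insert_erase (P.mem_part ha)]
        show insert (P.part a) (Q.parts.erase ((P.part a).erase a)) = P.parts
        rw [← hdel, delp_parts ha h2,
          Finset.erase_insert (erase_part_not_mem ha h2), Finset.insert_erase ((P.part_mem.2 ha))]
      · -- right inverse
        intro q hq
        show ((insp a ha Q hq).part a).erase a = q
        rw [insp_part_a ha Q hq, Finset.erase_insert (not_mem_erase_ground Q hq)]
    rw [key, hQc]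
  have hF3card : F3.card = (k + 1) * A.card := by
    rw [Finset.card_eq_sum_card_fiberwise hdelA, Finset.sum_congr rfl hfiber3,
      Finset.sum_const, smul_eq_mul, mul_comm]
  have hF2card : F2.card = ∑ y ∈ s.erase a, N ((s.erase a).erase y) k := by
    have hmemF2 : ∀ P ∈ F2, (P.part a).card = 2 ∧
        P.part a = insert a {partner a P} ∧ partner a P ∈ s.erase a := by
      intro P hP
      rw [hF2, Finset.mem_filter] at hP
      obtain ⟨hPF, h3⟩ := hP
      have h2 := hpart2 P hPF
      have hcard : (P.part a).card = 2 := by omega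
      have hc1 : ((P.part a).erase a).card = 1 := by
        rw [Finset.card_erase_of_mem (P.mem_part ha), hcard]
      obtain ⟨y, hy⟩ := Finset.card_eq_one.1 hc1
      have hpy : partner a P = y := partner_spec hy
      have hins : P.part a = insert a {y} := by
        conv_lhs => rw [← Finset.insert_erase (P.mem_part ha)]
        rw [hy]
      have hymem : y ∈ s.erase a := by
        have hym : y ∈ (P.part a).erase a := by rw [hy]; exact Finset.mem_singleton_self y
        exact Finset.mem_erase.2 ⟨(Finset.mem_erase.1 hym).1,
          P.le ((P.part_mem.2 ha)) (Finset.mem_of_mem_erase hym)⟩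
      rw [hpy]
      exact ⟨hcard, hins, hymem⟩
    rw [Finset.card_eq_sum_card_fiberwise (fun P hP => (hmemF2 P hP).2.2)]
    refine Finset.sum_congr rfl ?_
    intro y hy
    have hys : y ∈ s := Finset.mem_of_mem_erase hy
    have hya : y ≠ a := Finset.ne_of_mem_erase hy
    have hay : a ∉ ({y} : Finset α) := by
      rw [Finset.mem_singleton]; exact fun h => hya h.symm
    have key : ∀ P ∈ F2.filter (fun P => partner a P = y),
        s \ P.part a = (s.erase a).erase y := by
      intro P hP
      rw [Finset.mem_filter] at hP
      obtain ⟨hP2, hpy⟩ := hP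
      obtain ⟨-, hins, -⟩ := hmemF2 P hP2
      rw [hins, hpy]
      ext x
      simp only [Finset.mem_sdiff, Finset.mem_insert, Finset.mem_singleton, Finset.mem_erase]
      constructor
      · rintro ⟨hx, h⟩
        push_neg at h
        exact ⟨h.2, h.1, hx⟩
      · rintro ⟨h1, h2, h3⟩
        exact ⟨h3, by push_neg; exact ⟨h2, h1⟩⟩
    have hb : (insert a ({y} : Finset α)) ≠ ⊥ := by
      simp [Finset.bot_eq_empty]
    have hab : Disjoint ((s.erase a).erase y) (insert a ({y} : Finset α)) := by
      rw [Finset.disjoint_right]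
      intro x hx hx'
      rw [Finset.mem_insert, Finset.mem_singleton] at hx
      rw [Finset.mem_erase, Finset.mem_erase] at hx'
      rcases hx with rfl | rfl
      · exact hx'.2.1 rfl
      · exact hx'.1 rfl
    have hc : ((s.erase a).erase y) ⊔ insert a ({y} : Finset α) = s := by
      ext x
      simp only [sup_eq_union, Finset.mem_union, Finset.mem_erase, Finset.mem_insert,
        Finset.mem_singleton]
      constructor
      · rintro (⟨-, -, hx⟩ | (rfl | rfl))
        · exact hx
        · exact ha
        · exact hys
      · intro hx
        by_cases hxa : x = a
        · exact Or.inr (Or.inl hxa)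
        · by_cases hxy : x = y
          · exact Or.inr (Or.inr hxy)
          · exact Or.inl ⟨hxy, hxa, hx⟩
    have hnotinQ : ∀ Q : Finpartition ((s.erase a).erase y), insert a ({y} : Finset α) ∉ Q.parts := by
      intro Q hmem
      have := Q.le hmem (Finset.mem_insert_self a _)
      rw [Finset.mem_erase, Finset.mem_erase] at this
      exact this.2.1 rfl
    have hpaircard : (insert a ({y} : Finset α)).card = 2 := by
      rw [Finset.card_insert_of_notMem hay, Finset.card_singleton]
    rw [N_eq_filter]
    refine Finset.card_bij' (fun P hP => (P.avoid (P.part a)).copy (key P hP))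
      (fun Q _ => Q.extend hb hab hc) ?_ ?_ ?_ ?_
    · -- forward into filter
      intro P hP
      have hP' := hP
      rw [Finset.mem_filter] at hP'
      obtain ⟨hP2, hpy⟩ := hP'
      rw [hF2, Finset.mem_filter, hF, Finset.mem_filter] at hP2
      obtain ⟨⟨-, hcnt, hsz⟩, -⟩ := hP2
      rw [Finset.mem_filter]
      refine ⟨Finset.mem_univ _, ?_, ?_⟩
      · show ((P.avoid (P.part a)).copy (key P hP)).parts.card = k
        rw [Finpartition.copy_parts, avoid_parts_of_mem P ((P.part_mem.2 ha)),
          Finset.card_erase_of_mem ((P.part_mem.2 ha)), hcnt]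
        omega
      · intro p hp
        have : p ∈ P.parts.erase (P.part a) := by
          rwa [Finpartition.copy_parts, avoid_parts_of_mem P ((P.part_mem.2 ha))] at hp
        exact hsz _ (Finset.mem_of_mem_erase this)
    · -- backward into fiber
      intro Q hQ
      rw [Finset.mem_filter] at hQ
      obtain ⟨-, hQc, hQsz⟩ := hQ
      have hparts : (Q.extend hb hab hc).parts = insert (insert a {y}) Q.parts :=
        Finpartition.extend_parts _ _ _ _
      have hpa : (Q.extend hb hab hc).part a = insert a {y} := by
        refine (Q.extend hb hab hc).part_eq_of_mem ?_ (Finset.mem_insert_self a _)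
        rw [hparts]; exact Finset.mem_insert_self _ _
      rw [Finset.mem_filter, hF2, Finset.mem_filter, hF, Finset.mem_filter]
      refine ⟨⟨⟨Finset.mem_univ _, ?_, ?_⟩, ?_⟩, ?_⟩
      · rw [hparts, Finset.card_insert_of_notMem (hnotinQ Q), hQc]
      · intro p hp
        rw [hparts, Finset.mem_insert] at hp
        rcases hp with rfl | hp
        · omega
        · exact hQsz _ hp
      · rw [hpa, hpaircard]; omega
      · show partner a (Q.extend hb hab hc) = y
        apply partner_spec
        rw [hpa, Finset.erase_insert hay]
    · -- left inverse
      intro P hP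
      have hP' := hP
      rw [Finset.mem_filter] at hP'
      obtain ⟨hP2, hpy⟩ := hP'
      obtain ⟨-, hins, -⟩ := hmemF2 P hP2
      apply Finpartition.ext
      show (insert (insert a {y}) ((P.avoid (P.part a)).copy (key P hP)).parts) = P.parts
      rw [Finpartition.copy_parts, avoid_parts_of_mem P ((P.part_mem.2 ha)), ← hpy, ← hins,
        Finset.insert_erase ((P.part_mem.2 ha))]
    · -- right inverse
      intro Q hQ
      apply Finpartition.ext
      have hparts : (Q.extend hb hab hc).parts = insert (insert a {y}) Q.parts :=
        Finpartition.extend_parts _ _ _ _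
      have hpa : (Q.extend hb hab hc).part a = insert a {y} := by
        refine (Q.extend hb hab hc).part_eq_of_mem ?_ (Finset.mem_insert_self a _)
        rw [hparts]; exact Finset.mem_insert_self _ _
      show ((Q.extend hb hab hc).avoid ((Q.extend hb hab hc).part a)).parts = Q.parts
      rw [avoid_parts_of_mem _ ?pm, hpa, hparts, Finset.erase_insert (hnotinQ Q)]
      case pm => rw [hpa, hparts]; exact Finset.mem_insert_self _ _
  rw [N_eq_filter, ← hF, ← hsplit, hF3card, hF2card, N_eq_filter, ← hA]

lemma assocStirling_zero_zero : assocStirling 0 0 = 1 := by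
  rw [assocStirling_eq_N, Finset.univ_eq_empty]
  exact N_empty

lemma assocStirling_succ_zero (m : ℕ) : assocStirling (m + 1) 0 = 0 := by
  rw [assocStirling_eq_N]
  exact N_pos_zero Finset.univ_nonempty

lemma assocStirling_small {m k : ℕ} (h : m < 2 * k) : assocStirling m k = 0 := by
  rw [assocStirling_eq_N]
  exact N_small k (by rwa [Finset.card_univ, Fintype.card_fin])

lemma assocStirling_rec (m k : ℕ) :
    assocStirling (m + 2) (k + 1)
      = (k + 1) * assocStirling (m + 1) (k + 1) + (m + 1) * assocStirling m k := by
  classical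
  have ha : (0 : Fin (m + 2)) ∈ (Finset.univ : Finset (Fin (m + 2))) := Finset.mem_univ _
  have h := N_rec ha k
  have hcard1 : ((Finset.univ : Finset (Fin (m + 2))).erase 0).card = m + 1 := by
    rw [Finset.card_erase_of_mem ha, Finset.card_univ, Fintype.card_fin]
    omega
  have trans1 : N ((Finset.univ : Finset (Fin (m + 2))).erase 0) (k + 1)
      = assocStirling (m + 1) (k + 1) := by
    rw [N_eq_assocStirlingRaw, hcard1, assocStirling_eq_N]
  have trans2 : ∀ y ∈ (Finset.univ : Finset (Fin (m + 2))).erase 0,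
      N (((Finset.univ : Finset (Fin (m + 2))).erase 0).erase y) k = assocStirling m k := by
    intro y hy
    have hcc : ((((Finset.univ : Finset (Fin (m + 2))).erase 0)).erase y).card = m := by
      rw [Finset.card_erase_of_mem hy, hcard1]
      omega
    rw [N_eq_assocStirlingRaw, hcc, assocStirling_eq_N]
  rw [assocStirling_eq_N, h, trans1, Finset.sum_congr rfl trans2, Finset.sum_const, hcard1,
    smul_eq_mul]

section Alg
open Finset
variable (B : ℕ → ℕ → ℤ)

lemma Bzero (h0k : ∀ k, B 0 (k + 1) = 0)
    (hrec : ∀ n k : ℕ, B (n + 1) (k + 1) =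
      ((k : ℤ) + 1) * B n (k + 1) + (2 * ((n : ℤ) + 1) - ((k : ℤ) + 1)) * B n k) :
    ∀ n j, n < j → B n j = 0 := by
  intro n
  induction n with
  | zero =>
    intro j hj
    obtain ⟨i, rfl⟩ : ∃ i, j = i + 1 := ⟨j - 1, by omega⟩
    exact h0k i
  | succ n ih =>
    intro j hj
    obtain ⟨i, rfl⟩ : ∃ i, j = i + 1 := ⟨j - 1, by omega⟩
    rw [hrec n i, ih _ (by omega), ih _ (by omega)]
    ring

lemma row_sum (hn0 : ∀ n, B (n + 1) 0 = 0 * B n 0)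
    (h0k : ∀ k, B 0 (k + 1) = 0)
    (hrec : ∀ n k : ℕ, B (n + 1) (k + 1) =
      ((k : ℤ) + 1) * B n (k + 1) + (2 * ((n : ℤ) + 1) - ((k : ℤ) + 1)) * B n k)
    (k : ℕ) :
    ∑ j ∈ range (k + 2), B (k + 1) j = (2 * (k : ℤ) + 1) * ∑ j ∈ range (k + 1), B k j := by
  rw [Finset.sum_range_succ' (B (k + 1)) (k + 1), hn0]
  have hterm : ∀ j ∈ range (k + 1),
      B (k + 1) (j + 1) = (((j : ℤ) + 1) * B k (j + 1) + (2 * (k : ℤ) + 1 - j) * B k j) := by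
    intro j hj
    rw [hrec k j]; ring
  rw [Finset.sum_congr rfl hterm, Finset.sum_add_distrib]
  have h1 : ∑ j ∈ range (k + 1), ((j : ℤ) + 1) * B k (j + 1)
      = ∑ j ∈ range (k + 1), (j : ℤ) * B k j := by
    have e1 : ∑ i ∈ range (k + 2), (i : ℤ) * B k i
        = (∑ j ∈ range (k + 1), ((j : ℤ) + 1) * B k (j + 1)) + (0 : ℤ) * B k 0 := by
      rw [Finset.sum_range_succ' (fun i => (i : ℤ) * B k i) (k + 1)]
      push_cast
      ring
    have e2 : ∑ i ∈ range (k + 2), (i : ℤ) * B k i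
        = (∑ j ∈ range (k + 1), (j : ℤ) * B k j) + ((k : ℤ) + 1) * B k (k + 1) := by
      rw [Finset.sum_range_succ (fun i => (i : ℤ) * B k i) (k + 1)]
      push_cast
      ring
    rw [Bzero B h0k hrec k (k + 1) (by omega)] at e2
    simp only [zero_mul, mul_zero, add_zero] at e1 e2
    exact e1.symm.trans e2
  rw [h1]
  simp only [zero_mul, add_zero]
  rw [← Finset.sum_add_distrib, Finset.mul_sum]
  refine Finset.sum_congr rfl ?_
  intro j hj; ring

lemma Salg (hn0 : ∀ n, B (n + 1) 0 = 0 * B n 0)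
    (h0k : ∀ k, B 0 (k + 1) = 0)
    (hrec : ∀ n k : ℕ, B (n + 1) (k + 1) =
      ((k : ℤ) + 1) * B n (k + 1) + (2 * ((n : ℤ) + 1) - ((k : ℤ) + 1)) * B n k)
    (n k : ℕ) (hnk : k + 1 ≤ n) :
    ∑ j ∈ range (k + 2), B (n + 1) j * (((n + 1 - j).choose (n - k) : ℕ) : ℤ)
      = ((k : ℤ) + 1) * ∑ j ∈ range (k + 2), B n j * (((n - j).choose (n - k - 1) : ℕ) : ℤ)
      + ((n : ℤ) + (k : ℤ) + 1) * ∑ j ∈ range (k + 1), B n j * (((n - j).choose (n - k) : ℕ) : ℤ) := by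
  set U : ℤ := ∑ j ∈ range (k + 2), (j : ℤ) * B n j * (((n - j).choose (n - k - 1) : ℕ) : ℤ) with hU
  set V : ℤ := ∑ j ∈ range (k + 1), B n j * (((n - j).choose (n - k) : ℕ) : ℤ) with hV
  set W : ℤ := ∑ j ∈ range (k + 2), B n j * (((n - j).choose (n - k - 1) : ℕ) : ℤ) with hW
  have hLHS : ∑ j ∈ range (k + 2), B (n + 1) j * (((n + 1 - j).choose (n - k) : ℕ) : ℤ)
      = U + (2 * (n : ℤ) + 1) * V := by
    rw [Finset.sum_range_succ' (fun j => B (n + 1) j * (((n + 1 - j).choose (n - k) : ℕ) : ℤ)) (k + 1)]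
    rw [hn0]
    simp only [zero_mul, add_zero]
    have hterm : ∀ j ∈ range (k + 1),
        B (n + 1) (j + 1) * (((n + 1 - (j + 1)).choose (n - k) : ℕ) : ℤ)
        = ((j : ℤ) + 1) * B n (j + 1) * (((n - j).choose (n - k) : ℕ) : ℤ)
          + (2 * (n : ℤ) + 1 - j) * B n j * (((n - j).choose (n - k) : ℕ) : ℤ) := by
      intro j hj
      have e : n + 1 - (j + 1) = n - j := by omega
      rw [e, hrec n j]; ring
    rw [Finset.sum_congr rfl hterm, Finset.sum_add_distrib]
    -- first sum = Σ_{i ∈ range (k+2)} i * B n i * C(n+1-i, n-k)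
    have h1 : ∑ j ∈ range (k + 1), ((j : ℤ) + 1) * B n (j + 1) * (((n - j).choose (n - k) : ℕ) : ℤ)
        = ∑ i ∈ range (k + 2), (i : ℤ) * B n i * (((n + 1 - i).choose (n - k) : ℕ) : ℤ) := by
      rw [Finset.sum_range_succ'
        (fun i => (i : ℤ) * B n i * (((n + 1 - i).choose (n - k) : ℕ) : ℤ)) (k + 1)]
      simp only [Nat.cast_zero, zero_mul, add_zero, Nat.cast_add, Nat.cast_one]
      refine (Finset.sum_congr rfl ?_).symm
      intro j hj
      have e : n + 1 - (j + 1) = n - j := by omega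
      rw [e]
    rw [h1]
    -- Pascal
    have h2 : ∀ i ∈ range (k + 2),
        (i : ℤ) * B n i * (((n + 1 - i).choose (n - k) : ℕ) : ℤ)
        = (i : ℤ) * B n i * (((n - i).choose (n - k - 1) : ℕ) : ℤ)
          + (i : ℤ) * B n i * (((n - i).choose (n - k) : ℕ) : ℤ) := by
      intro i hi
      rw [Finset.mem_range] at hi
      have e1 : n + 1 - i = (n - i) + 1 := by omega
      have e2 : n - k = (n - k - 1) + 1 := by omega
      have hp : (n + 1 - i).choose (n - k) = (n - i).choose (n - k - 1) + (n - i).choose (n - k) := by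
        rw [e1, e2, Nat.choose_succ_succ, Nat.succ_eq_add_one, ← e2]
      rw [hp]
      push_cast
      ring
    rw [Finset.sum_congr rfl h2, Finset.sum_add_distrib]
    -- second piece: drop the last (zero) term
    have h3 : ∑ i ∈ range (k + 2), (i : ℤ) * B n i * (((n - i).choose (n - k) : ℕ) : ℤ)
        = ∑ i ∈ range (k + 1), (i : ℤ) * B n i * (((n - i).choose (n - k) : ℕ) : ℤ) := by
      rw [Finset.sum_range_succ]
      have : (n - (k + 1)).choose (n - k) = 0 :=
        Nat.choose_eq_zero_of_lt (by omega)
      rw [this]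
      push_cast
      ring
    rw [h3]
    -- combine
    rw [add_assoc, ← Finset.sum_add_distrib, hU, hV, Finset.mul_sum]
    congr 1
    refine Finset.sum_congr rfl ?_
    intro j hj
    ring
  rw [hLHS]
  -- remains : U + (2n+1) V = (k+1) W + (n+k+1) V
  have key : ((k : ℤ) + 1) * W - U = ((n : ℤ) - k) * V := by
    have h4 : ((k : ℤ) + 1) * W - U
        = ∑ j ∈ range (k + 2), ((k : ℤ) + 1 - j) * B n j * (((n - j).choose (n - k - 1) : ℕ) : ℤ) := by
      rw [hU, hW, Finset.mul_sum, ← Finset.sum_sub_distrib]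
      refine Finset.sum_congr rfl ?_
      intro j hj; ring
    rw [h4, Finset.sum_range_succ]
    have hz : ((k : ℤ) + 1 - (k + 1 : ℕ)) = 0 := by push_cast; ring
    rw [hz, zero_mul, zero_mul, add_zero, hV, Finset.mul_sum]
    refine Finset.sum_congr rfl ?_
    intro j hj
    rw [Finset.mem_range] at hj
    have hid : (n - j).choose (n - k) * (n - k) = (n - j).choose (n - k - 1) * (k + 1 - j) := by
      have e2 : n - k = (n - k - 1) + 1 := by omega
      have := Nat.choose_succ_right_eq (n - j) (n - k - 1)
      rw [← e2] at this
      rw [this]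
      congr 1
      omega
    have hcast : (((n - j).choose (n - k) : ℕ) : ℤ) * ((n : ℤ) - k)
        = (((n - j).choose (n - k - 1) : ℕ) : ℤ) * ((k : ℤ) + 1 - j) := by
      have := congrArg (fun x : ℕ => (x : ℤ)) hid
      push_cast at this
      rw [Nat.cast_sub (by omega), Nat.cast_sub (by omega)] at this
      push_cast at this
      linarith [this]
    linear_combination (-(B n j)) * hcast
  linarith [key]

end Alg

/-- The Ward numbers, i.e. the associated Stirling subset numbers
`{n+k over k}_{≥2}`, satisfy `{n+k over k}_{≥2} = ∑_{j=0}^{k} B(n,j) C(n-j,n-k)`,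
where `B(n,k)` are the second-order Eulerian numbers with traditional indexing,
defined by `B(n,k) = k·B(n-1,k) + (2n-k)·B(n-1,k-1) + δ_{n0}δ_{k0}` (vanishing
for negative indices), and `C(n-j, n-k)` is understood to vanish when
`n - k < 0`. -/
theorem stmt14 (B : ℕ → ℕ → ℤ)
    (h00 : B 0 0 = 1) (h0k : ∀ k, B 0 (k + 1) = 0)
    (hn0 : ∀ n, B (n + 1) 0 = 0 * B n 0)
    (hrec : ∀ n k : ℕ, B (n + 1) (k + 1) =
      ((k : ℤ) + 1) * B n (k + 1) +
      (2 * ((n : ℤ) + 1) - ((k : ℤ) + 1)) * B n k)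
    (n k : ℕ) :
    (assocStirling (n + k) k : ℤ) = ∑ j ∈ Finset.range (k + 1),
      B n j * (if n < k then 0 else ((n - j).choose (n - k) : ℤ)) := by
  induction n generalizing k with
  | zero =>
    cases k with
    | zero => simp [assocStirling_zero_zero, h00]
    | succ k =>
      rw [Nat.zero_add, assocStirling_small (by omega)]
      simp [Nat.zero_lt_succ]
  | succ n ih =>
    cases k with
    | zero =>
      rw [Nat.add_zero, assocStirling_succ_zero]
      simp [hn0 n]
    | succ k =>
      have hrw : n + 1 + (k + 1) = (n + k) + 2 := by omega
      rw [hrw, assocStirling_rec (n + k) k]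
      push_cast
      rw [show n + k + 1 = n + (k + 1) from by omega, ih (k + 1), ih k]
      rcases lt_trichotomy n k with hlt | heq | hgt
      · simp [if_pos hlt, if_pos (show n < k + 1 by omega), if_pos (show n + 1 < k + 1 by omega)]
        exact fun h => absurd h (by omega)
      · subst heq
        simp only [if_pos (show n < n + 1 by omega), if_neg (show ¬ n < n by omega),
          if_neg (show ¬ n + 1 < n + 1 by omega), Nat.sub_self, Nat.choose_zero_right,
          Nat.cast_one, mul_one, mul_zero, Finset.sum_const_zero, mul_zero, zero_add,
          Nat.add_sub_cancel]
        rw [row_sum B hn0 h0k hrec n]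
        ring
      · simp only [if_neg (show ¬ n < k from by omega), if_neg (show ¬ n < k + 1 from by omega),
          if_neg (show ¬ n + 1 < k + 1 from by omega),
          show n + 1 - (k + 1) = n - k from by omega,
          show n - (k + 1) = n - k - 1 from by omega]
        linear_combination (-1 : ℤ) * Salg B hn0 h0k hrec n k (by omega)
end
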